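/- arXiv:1910.09907 — 4 statements merged into one kernel-verified Lean document; each statement's English description precedes it below -/
import Mathlib

section
/- Let P = Σ_{|α|≤d} a_α(z) D_z^α be a linear partial differential operator with smooth real coefficients on ℝ^N, and let P̃ = Σ_{|γ|≤d̃} b_γ(z,ξ) D_{(z,ξ)}^γ be a linear partial differential operator with smooth real coefficients on ℝ^N × ℝ^p that lifts P, i.e. P̃(f∘π)(z,ξ) = (Pf)(z) for every f ∈ C^∞(ℝ^N) and every (z,ξ) ∈ ℝ^N × ℝ^p, where π(z,ξ) = z. Regard P as an operator on functions of (z,ξ) acting only in the z-variables (with coefficients a_α(z) independent of ξ), and set R := P̃ − P. Assume: (S.1) the formal adjoint R* of R can be written as R* = Σ_{(α,β), β≠0} r*_{α,β}(z,ξ) D_z^α D_ξ^β for finitely many smooth functions r*_{α,β} (i.e., every term of R* contains at least one ξ-derivative); (S.2) there exists a sequence θ_j ∈ C_c^∞(ℝ^p,[0,1]) such that the sets {ξ : θ_j(ξ) = 1} are nondecreasing in j with union ℝ^p, and for every compact K ⊆ ℝ^N and every coefficient r*_{α,β} there is a constant C_{α,β}(K) with |r*_{α,β}(z,ξ) D_ξ^β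 θ_j(ξ)| ≤ C_{α,β}(K) for all z ∈ K, ξ ∈ ℝ^p and all j. Suppose moreover that P̃ admits a global fundamental solution Γ̃((z,ξ);(ζ,η)) satisfying: (i) for every z, ζ ∈ ℝ^N with z ≠ ζ, the function η ↦ Γ̃((z,0);(ζ,η)) belongs to L¹(ℝ^p); (ii) for every z ∈ ℝ^N and every compact K ⊆ ℝ^N, the function (ζ,η) ↦ Γ̃((z,0);(ζ,η)) belongs to L¹(K × ℝ^p). Then the function Γ(z;ζ) := ∫_{ℝ^p} Γ̃((z,0);(ζ,η)) dη, defined for z ≠ ζ in ℝ^N, is a global fundamental solution for P on ℝ^N. -/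
open MeasureTheory Filter

noncomputable section

/-- The directional derivative of `f` along `v`. -/
def dirDeriv {E : Type*} [NormedAddCommGroup E] [NormedSpace ℝ E]
    (v : E) (f : E → ℝ) : E → ℝ :=
  fun x => fderiv ℝ f x v

/-- Iterated directional derivative of `f` along `v`. -/
def dirDerivIter {E : Type*} [NormedAddCommGroup E] [NormedSpace ℝ E]
    (v : E) : ℕ → (E → ℝ) → (E → ℝ)
  | 0, f => f
  | k + 1, f => dirDeriv v (dirDerivIter v k f)

/-- Derivative along a list of (direction, multiplicity) pairs. -/
def derivAlong {E : Type*} [NormedAddCommGroup E] [NormedSpace ℝ E] :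
    List (E × ℕ) → (E → ℝ) → (E → ℝ)
  | [], f => f
  | vk :: rest, f => dirDerivIter vk.1 vk.2 (derivAlong rest f)

/-- The multi-index partial derivative `D^α` on `ℝ^M`. -/
def Dmulti {M : ℕ} (α : Fin M → ℕ) (f : (Fin M → ℝ) → ℝ) : (Fin M → ℝ) → ℝ :=
  derivAlong ((List.finRange M).map fun i => (Pi.single i (1 : ℝ), α i)) f

/-- The mixed multi-index partial derivative `D_z^α D_ξ^β` on `ℝ^N × ℝ^p`. -/
def DmultiProd {N p : ℕ} (α : Fin N → ℕ) (β : Fin p → ℕ)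
    (f : (Fin N → ℝ) × (Fin p → ℝ) → ℝ) : (Fin N → ℝ) × (Fin p → ℝ) → ℝ :=
  derivAlong
    (((List.finRange N).map fun i =>
        (((Pi.single i (1 : ℝ) : Fin N → ℝ), (0 : Fin p → ℝ)), α i)) ++
      ((List.finRange p).map fun j =>
        (((0 : Fin N → ℝ), (Pi.single j (1 : ℝ) : Fin p → ℝ)), β j))) f

/-- Application of the PDO `P = Σ_i a_i D^{α_i}` on `ℝ^M`. -/
def pdoApply {M : ℕ} {ι : Type} [Fintype ι]
    (a : ι → (Fin M → ℝ) → ℝ) (α : ι → Fin M → ℕ)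
    (f : (Fin M → ℝ) → ℝ) (x : Fin M → ℝ) : ℝ :=
  ∑ i, a i x * Dmulti (α i) f x

/-- The formal adjoint `P*ψ = Σ_i (−1)^{|α_i|} D^{α_i}(a_i ψ)` on `ℝ^M`. -/
def pdoAdj {M : ℕ} {ι : Type} [Fintype ι]
    (a : ι → (Fin M → ℝ) → ℝ) (α : ι → Fin M → ℕ)
    (ψ : (Fin M → ℝ) → ℝ) (x : Fin M → ℝ) : ℝ :=
  ∑ i, (-1 : ℝ) ^ (∑ j, α i j) * Dmulti (α i) (fun y => a i y * ψ y) x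

/-- Application of the PDO `Σ_i b_i D_z^{α_i} D_ξ^{β_i}` on `ℝ^N × ℝ^p`. -/
def pdoApplyProd {N p : ℕ} {ι : Type} [Fintype ι]
    (b : ι → (Fin N → ℝ) × (Fin p → ℝ) → ℝ)
    (α : ι → Fin N → ℕ) (β : ι → Fin p → ℕ)
    (f : (Fin N → ℝ) × (Fin p → ℝ) → ℝ) (w : (Fin N → ℝ) × (Fin p → ℝ)) : ℝ :=
  ∑ i, b i w * DmultiProd (α i) (β i) f w

/-- The formal adjoint of `Σ_i b_i D_z^{α_i} D_ξ^{β_i}` on `ℝ^N × ℝ^p`. -/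
def pdoAdjProd {N p : ℕ} {ι : Type} [Fintype ι]
    (b : ι → (Fin N → ℝ) × (Fin p → ℝ) → ℝ)
    (α : ι → Fin N → ℕ) (β : ι → Fin p → ℕ)
    (ψ : (Fin N → ℝ) × (Fin p → ℝ) → ℝ) (w : (Fin N → ℝ) × (Fin p → ℝ)) : ℝ :=
  ∑ i, (-1 : ℝ) ^ ((∑ j, α i j) + ∑ j, β i j) *
    DmultiProd (α i) (β i) (fun v => b i v * ψ v) w

/-- `Γ` is a global fundamental solution on `ℝ^M` for the operator with data `(a, α)`. -/
def IsFundSol {M : ℕ} {ι : Type} [Fintype ι]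
    (a : ι → (Fin M → ℝ) → ℝ) (α : ι → Fin M → ℕ)
    (Γ : (Fin M → ℝ) → (Fin M → ℝ) → ℝ) : Prop :=
  ∀ x : Fin M → ℝ,
    LocallyIntegrable (Γ x) volume ∧
    ∀ φ : (Fin M → ℝ) → ℝ, ContDiff ℝ (⊤ : ℕ∞) φ → HasCompactSupport φ →
      ∫ y, Γ x y * pdoAdj a α φ y = -φ x

/-- `Γ̃` is a global fundamental solution on `ℝ^N × ℝ^p` for the operator with data
`(b, α, β)`. -/
def IsFundSolProd {N p : ℕ} {ι : Type} [Fintype ι]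
    (b : ι → (Fin N → ℝ) × (Fin p → ℝ) → ℝ)
    (α : ι → Fin N → ℕ) (β : ι → Fin p → ℕ)
    (Γ : (Fin N → ℝ) × (Fin p → ℝ) → (Fin N → ℝ) × (Fin p → ℝ) → ℝ) : Prop :=
  ∀ w : (Fin N → ℝ) × (Fin p → ℝ),
    LocallyIntegrable (Γ w) volume ∧
    ∀ ψ : (Fin N → ℝ) × (Fin p → ℝ) → ℝ,
      ContDiff ℝ (⊤ : ℕ∞) ψ → HasCompactSupport ψ →
      ∫ v, Γ w v * pdoAdjProd b α β ψ v = -ψ w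

section Aux

variable {E F : Type*} [NormedAddCommGroup E] [NormedSpace ℝ E]
  [NormedAddCommGroup F] [NormedSpace ℝ F]

lemma contDiff_dirDeriv {f : E → ℝ} (hf : ContDiff ℝ (⊤ : ℕ∞) f) (v : E) :
    ContDiff ℝ (⊤ : ℕ∞) (dirDeriv v f) :=
  (hf.fderiv_right (by simp)).clm_apply contDiff_const

lemma contDiff_dirDerivIter {f : E → ℝ} (hf : ContDiff ℝ (⊤ : ℕ∞) f) (v : E) (k : ℕ) :
    ContDiff ℝ (⊤ : ℕ∞) (dirDerivIter v k f) := by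
  induction k with
  | zero => exact hf
  | succ k ih => exact contDiff_dirDeriv ih v

lemma contDiff_derivAlong {f : E → ℝ} (hf : ContDiff ℝ (⊤ : ℕ∞) f) (l : List (E × ℕ)) :
    ContDiff ℝ (⊤ : ℕ∞) (derivAlong l f) := by
  induction l with
  | nil => exact hf
  | cons vk rest ih => exact contDiff_dirDerivIter ih vk.1 vk.2

lemma contDiff_Dmulti {M : ℕ} {f : (Fin M → ℝ) → ℝ} (hf : ContDiff ℝ (⊤ : ℕ∞) f)
    (α : Fin M → ℕ) : ContDiff ℝ (⊤ : ℕ∞) (Dmulti α f) :=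
  contDiff_derivAlong hf _

lemma support_dirDeriv_subset {f : E → ℝ} (v : E) :
    Function.support (dirDeriv v f) ⊆ tsupport f := by
  intro x hx
  by_contra hmem
  have h0 : fderiv ℝ f x = 0 := by
    by_contra hne
    exact hmem (support_fderiv_subset ℝ (f := f) hne)
  simp [dirDeriv, h0] at hx

lemma tsupport_dirDeriv_subset {f : E → ℝ} (v : E) :
    tsupport (dirDeriv v f) ⊆ tsupport f :=
  closure_minimal (support_dirDeriv_subset v) (isClosed_tsupport f)

lemma tsupport_dirDerivIter_subset {f : E → ℝ} (v : E) (k : ℕ) :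
    tsupport (dirDerivIter v k f) ⊆ tsupport f := by
  induction k with
  | zero => exact subset_rfl
  | succ k ih => exact (tsupport_dirDeriv_subset v).trans ih

lemma tsupport_derivAlong_subset {f : E → ℝ} (l : List (E × ℕ)) :
    tsupport (derivAlong l f) ⊆ tsupport f := by
  induction l with
  | nil => exact subset_rfl
  | cons vk rest ih => exact (tsupport_dirDerivIter_subset vk.1 vk.2).trans ih

lemma derivAlong_eq_zero {f : E → ℝ} (l : List (E × ℕ)) {x : E} (hx : x ∉ tsupport f) :
    derivAlong l f x = 0 := by
  by_contra h
  exact hx (tsupport_derivAlong_subset l (subset_closure (by simpa using h)))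

lemma derivAlong_append (l₁ l₂ : List (E × ℕ)) (f : E → ℝ) :
    derivAlong (l₁ ++ l₂) f = derivAlong l₁ (derivAlong l₂ f) := by
  induction l₁ with
  | nil => rfl
  | cons vk rest ih => simp [derivAlong, ih]

lemma derivAlong_of_mults_zero {f : E → ℝ} {l : List (E × ℕ)} (h : ∀ e ∈ l, e.2 = 0) :
    derivAlong l f = f := by
  induction l with
  | nil => rfl
  | cons vk rest ih =>
      have h2 : vk.2 = 0 := h vk List.mem_cons_self
      have := ih (fun e he => h e (List.mem_cons_of_mem _ he))
      simp [derivAlong, h2, dirDerivIter, this]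

end Aux
section Tensor

variable {E F : Type*} [NormedAddCommGroup E] [NormedSpace ℝ E]
  [NormedAddCommGroup F] [NormedSpace ℝ F]

lemma dirDeriv_tensor_fst {f : E → ℝ} {g : F → ℝ}
    (hf : ContDiff ℝ (⊤ : ℕ∞) f) (hg : ContDiff ℝ (⊤ : ℕ∞) g) (v : E) (a : E × F) :
    dirDeriv ((v, (0 : F)) : E × F) (fun w => f w.1 * g w.2) a
      = dirDeriv v f a.1 * g a.2 := by
  have h1 : HasFDerivAt (fun w : E × F => f w.1)
      ((fderiv ℝ f a.1).comp (ContinuousLinearMap.fst ℝ E F)) a :=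
    ((hf.differentiable (by simp) a.1).hasFDerivAt).comp a (hasFDerivAt_fst)
  have h2 : HasFDerivAt (fun w : E × F => g w.2)
      ((fderiv ℝ g a.2).comp (ContinuousLinearMap.snd ℝ E F)) a :=
    ((hg.differentiable (by simp) a.2).hasFDerivAt).comp a (hasFDerivAt_snd)
  have h := (h1.mul h2).fderiv
  simp only [dirDeriv]
  rw [show (fun w : E × F => f w.1 * g w.2) = (fun w => f w.1) * (fun w => g w.2) from rfl, h]
  simp [mul_comm]

lemma dirDeriv_tensor_snd {f : E → ℝ} {g : F → ℝ}
    (hf : ContDiff ℝ (⊤ : ℕ∞) f) (hg : ContDiff ℝ (⊤ : ℕ∞) g) (w0 : F) (a : E × F) :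
    dirDeriv (((0 : E), w0) : E × F) (fun w => f w.1 * g w.2) a
      = f a.1 * dirDeriv w0 g a.2 := by
  have h1 : HasFDerivAt (fun w : E × F => f w.1)
      ((fderiv ℝ f a.1).comp (ContinuousLinearMap.fst ℝ E F)) a :=
    ((hf.differentiable (by simp) a.1).hasFDerivAt).comp a (hasFDerivAt_fst)
  have h2 : HasFDerivAt (fun w : E × F => g w.2)
      ((fderiv ℝ g a.2).comp (ContinuousLinearMap.snd ℝ E F)) a :=
    ((hg.differentiable (by simp) a.2).hasFDerivAt).comp a (hasFDerivAt_snd)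
  have h := (h1.mul h2).fderiv
  simp only [dirDeriv]
  rw [show (fun w : E × F => f w.1 * g w.2) = (fun w => f w.1) * (fun w => g w.2) from rfl, h]
  simp [mul_comm]

lemma dirDerivIter_tensor_fst {f : E → ℝ} {g : F → ℝ}
    (hf : ContDiff ℝ (⊤ : ℕ∞) f) (hg : ContDiff ℝ (⊤ : ℕ∞) g) (v : E) (k : ℕ) :
    dirDerivIter ((v, (0 : F)) : E × F) k (fun w => f w.1 * g w.2)
      = fun a => dirDerivIter v k f a.1 * g a.2 := by
  induction k with
  | zero => rfl
  | succ k ih =>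
      show dirDeriv _ (dirDerivIter _ k _) = _
      rw [ih]
      funext a
      exact dirDeriv_tensor_fst (contDiff_dirDerivIter hf v k) hg v a

lemma dirDerivIter_tensor_snd {f : E → ℝ} {g : F → ℝ}
    (hf : ContDiff ℝ (⊤ : ℕ∞) f) (hg : ContDiff ℝ (⊤ : ℕ∞) g) (w0 : F) (k : ℕ) :
    dirDerivIter (((0 : E), w0) : E × F) k (fun w => f w.1 * g w.2)
      = fun a => f a.1 * dirDerivIter w0 k g a.2 := by
  induction k with
  | zero => rfl
  | succ k ih =>
      show dirDeriv _ (dirDerivIter _ k _) = _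
      rw [ih]
      funext a
      exact dirDeriv_tensor_snd hf (contDiff_dirDerivIter hg w0 k) w0 a

lemma derivAlong_tensor_fst {f : E → ℝ} {g : F → ℝ}
    (hf : ContDiff ℝ (⊤ : ℕ∞) f) (hg : ContDiff ℝ (⊤ : ℕ∞) g) (l : List (E × ℕ)) :
    derivAlong (l.map fun vk => (((vk.1, (0 : F)) : E × F), vk.2))
        (fun w => f w.1 * g w.2)
      = fun a => derivAlong l f a.1 * g a.2 := by
  induction l with
  | nil => rfl
  | cons vk rest ih =>
      show dirDerivIter _ _ (derivAlong _ _) = _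
      rw [ih, dirDerivIter_tensor_fst (contDiff_derivAlong hf rest) hg vk.1 vk.2]
      rfl

lemma derivAlong_tensor_snd {f : E → ℝ} {g : F → ℝ}
    (hf : ContDiff ℝ (⊤ : ℕ∞) f) (hg : ContDiff ℝ (⊤ : ℕ∞) g) (l : List (F × ℕ)) :
    derivAlong (l.map fun vk => ((((0 : E), vk.1) : E × F), vk.2))
        (fun w => f w.1 * g w.2)
      = fun a => f a.1 * derivAlong l g a.2 := by
  induction l with
  | nil => rfl
  | cons vk rest ih =>
      show dirDerivIter _ _ (derivAlong _ _) = _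
      rw [ih, dirDerivIter_tensor_snd hf (contDiff_derivAlong hg rest) vk.1 vk.2]
      rfl

lemma DmultiProd_tensor {N p : ℕ} {f : (Fin N → ℝ) → ℝ} {g : (Fin p → ℝ) → ℝ}
    (hf : ContDiff ℝ (⊤ : ℕ∞) f) (hg : ContDiff ℝ (⊤ : ℕ∞) g)
    (α : Fin N → ℕ) (β : Fin p → ℕ) (a : (Fin N → ℝ) × (Fin p → ℝ)) :
    DmultiProd α β (fun w => f w.1 * g w.2) a = Dmulti α f a.1 * Dmulti β g a.2 := by
  have hL1 : ((List.finRange N).map fun i =>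
        (((Pi.single i (1 : ℝ) : Fin N → ℝ), (0 : Fin p → ℝ)), α i))
      = ((List.finRange N).map fun i => ((Pi.single i (1 : ℝ) : Fin N → ℝ), α i)).map
          fun vk => ((vk.1, (0 : Fin p → ℝ)), vk.2) := by
    simp [List.map_map, Function.comp]
  have hL2 : ((List.finRange p).map fun j =>
        (((0 : Fin N → ℝ), (Pi.single j (1 : ℝ) : Fin p → ℝ)), β j))
      = ((List.finRange p).map fun j => ((Pi.single j (1 : ℝ) : Fin p → ℝ), β j)).map
          fun vk => (((0 : Fin N → ℝ), vk.1), vk.2) := by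
    simp [List.map_map, Function.comp]
  rw [DmultiProd, hL1, hL2, derivAlong_append,
    derivAlong_tensor_snd hf hg,
    derivAlong_tensor_fst hf (contDiff_derivAlong hg _)]
  rfl

lemma Dmulti_zero {p : ℕ} (g : (Fin p → ℝ) → ℝ) :
    Dmulti (0 : Fin p → ℕ) g = g :=
  derivAlong_of_mults_zero (by simp)

end Tensor
section Density

open Metric ENNReal

lemma fderiv_ae_zero_on_level {d : ℕ} {u : (Fin d → ℝ) → ℝ}
    (hu : Differentiable ℝ u) {S : Set (Fin d → ℝ)} (hS : MeasurableSet S) (c : ℝ)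
    (hc : ∀ x ∈ S, u x = c) :
    ∀ᵐ x ∂(volume.restrict S), fderiv ℝ u x = 0 := by
  have hdens := Besicovitch.ae_tendsto_measure_inter_div_of_measurableSet
    (volume : Measure (Fin d → ℝ)) hS
  filter_upwards [ae_restrict_of_ae hdens, ae_restrict_mem hS] with x hx hxS
  rw [Set.indicator_of_mem hxS] at hx
  simp only [Pi.one_apply] at hx
  set L := fderiv ℝ u x with hLdef
  have key : ∀ v : Fin d → ℝ, ‖v‖ ≤ 1 → L v = 0 := by
    intro v hv
    by_contra hLv
    have hLvpos : 0 < |L v| := abs_pos.mpr hLv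
    have hLnn : 0 ≤ ‖L‖ := norm_nonneg L
    set ε : ℝ := |L v| / (2 * (2 + ‖L‖)) with hεdef
    have hεpos : 0 < ε := by positivity
    have hLvle : |L v| ≤ ‖L‖ := by
      calc |L v| = ‖L v‖ := rfl
        _ ≤ ‖L‖ * ‖v‖ := L.le_opNorm v
        _ ≤ ‖L‖ := by nlinarith
    have hε1 : ε ≤ 1 := by
      rw [hεdef, div_le_one (by positivity)]; nlinarith
    -- little-o estimate
    have hder := (hu x).hasFDerivAt
    have hlo := Asymptotics.isLittleO_iff.1 hder.isLittleO hεpos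
    rcases Metric.eventually_nhds_iff.1 hlo with ⟨δ, hδpos, hδ⟩
    -- for small r, the small ball around x + r • v misses S
    have hmiss : ∀ r : ℝ, 0 < r → 2 * r < δ →
        S ∩ closedBall (x + r • v) (ε * r) = ∅ := by
      intro r hr h2r
      rw [Set.eq_empty_iff_forall_notMem]
      rintro y ⟨hyS, hyB⟩
      rw [mem_closedBall, dist_eq_norm] at hyB
      have hyx : ‖y - x‖ ≤ 2 * r := by
        have : y - x = (y - (x + r • v)) + r • v := by abel
        rw [this]
        calc ‖(y - (x + r • v)) + r • v‖ ≤ ‖y - (x + r • v)‖ + ‖r • v‖ := norm_add_le _ _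
          _ ≤ ε * r + |r| * ‖v‖ := by
              rw [norm_smul, Real.norm_eq_abs]; gcongr
          _ ≤ 1 * r + r * 1 := by
              rw [abs_of_pos hr]; gcongr
          _ = 2 * r := by ring
      have hdist : dist y x < δ := by
        rw [dist_eq_norm]; linarith
      have hest := hδ hdist
      rw [hc y hyS, hc x hxS] at hest
      simp only [sub_self, zero_sub, norm_neg] at hest
      -- ‖L (y - x)‖ ≤ ε * ‖y - x‖
      have h1 : ‖L (y - x)‖ ≤ ε * (2 * r) := by
        calc ‖L (y - x)‖ ≤ ε * ‖y - x‖ := hest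
          _ ≤ ε * (2 * r) := by gcongr
      have h2 : ‖L (y - x - r • v)‖ ≤ ‖L‖ * (ε * r) := by
        calc ‖L (y - x - r • v)‖ ≤ ‖L‖ * ‖y - x - r • v‖ := L.le_opNorm _
          _ ≤ ‖L‖ * (ε * r) := by
              gcongr
              have : y - x - r • v = y - (x + r • v) := by abel
              rw [this]; exact hyB
      have h3 : r * |L v| = ‖L (r • v)‖ := by
        rw [_root_.map_smul, norm_smul, Real.norm_eq_abs, abs_of_pos hr]; rfl
      have h4 : ‖L (r • v)‖ ≤ ‖L (y - x)‖ + ‖L (y - x - r • v)‖ := by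
        have : L (r • v) = L (y - x) - L (y - x - r • v) := by
          rw [← map_sub]; congr 1; abel
        rw [this]; exact norm_sub_le _ _
      have hfin : r * |L v| ≤ ε * r * (2 + ‖L‖) := by
        rw [h3]
        calc ‖L (r • v)‖ ≤ ε * (2 * r) + ‖L‖ * (ε * r) := le_trans h4 (by linarith)
          _ = ε * r * (2 + ‖L‖) := by ring
      have : |L v| ≤ ε * (2 + ‖L‖) := by
        have := le_of_mul_le_mul_left (by linarith [hfin] : r * |L v| ≤ r * (ε * (2 + ‖L‖))) hr
        linarith
      have h2L : (0:ℝ) < 2 + ‖L‖ := by linarith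
      have hεval : ε * (2 + ‖L‖) = |L v| / 2 := by
        rw [hεdef]; field_simp
      rw [hεval] at this
      linarith
    -- measure-theoretic contradiction
    set n := Module.finrank ℝ (Fin d → ℝ) with hn
    set t : ℝ≥0∞ := ENNReal.ofReal ((ε / 2) ^ n) with ht
    have htpos : 0 < t := by
      rw [ht]; exact ENNReal.ofReal_pos.2 (by positivity)
    have hbound : ∀ᶠ ρ in nhdsWithin (0:ℝ) (Set.Ioi 0),
        volume (S ∩ closedBall x ρ) / volume (closedBall x ρ) ≤ 1 - t := by
      filter_upwards [Ioo_mem_nhdsGT hδpos] with ρ hρ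
      obtain ⟨hρ0, hρδ⟩ := hρ
      set r := ρ / 2 with hr
      have hr0 : 0 < r := by positivity
      have h2r : 2 * r < δ := by rw [hr]; linarith
      have hmiss' := hmiss r hr0 h2r
      have hsub : closedBall (x + r • v) (ε * r) ⊆ closedBall x ρ := by
        intro w hw
        rw [mem_closedBall, dist_eq_norm] at hw ⊢
        have : w - x = (w - (x + r • v)) + r • v := by abel
        rw [this]
        calc ‖(w - (x + r • v)) + r • v‖ ≤ ‖w - (x + r • v)‖ + ‖r • v‖ := norm_add_le _ _
          _ ≤ ε * r + |r| * ‖v‖ := by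
              rw [norm_smul, Real.norm_eq_abs]; gcongr
          _ ≤ 1 * r + r * 1 := by rw [abs_of_pos hr0]; gcongr
          _ = ρ := by rw [hr]; ring
      have hdisj : S ∩ closedBall x ρ ⊆ closedBall x ρ \ closedBall (x + r • v) (ε * r) := by
        rintro w ⟨hwS, hwB⟩
        refine ⟨hwB, fun hwB' => ?_⟩
        have : w ∈ S ∩ closedBall (x + r • v) (ε * r) := ⟨hwS, hwB'⟩
        rw [hmiss'] at this
        exact this
      have hμsmall : volume (closedBall (x + r • v) (ε * r)) = t * volume (closedBall x ρ) := by
        rw [Measure.addHaar_closedBall _ _ (by positivity : (0:ℝ) ≤ ε * r),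
          Measure.addHaar_closedBall _ _ hρ0.le]
        rw [← mul_assoc, ← ENNReal.ofReal_mul (by positivity)]
        congr 2
        rw [hr, ← hn]
        rw [← mul_pow]
        congr 1
        ring
      have hμpos : volume (closedBall x ρ) ≠ 0 :=
        (measure_closedBall_pos volume x hρ0).ne'
      have hμfin : volume (closedBall x ρ) ≠ ∞ :=
        (measure_closedBall_lt_top).ne
      calc volume (S ∩ closedBall x ρ) / volume (closedBall x ρ)
          ≤ volume (closedBall x ρ \ closedBall (x + r • v) (ε * r))
              / volume (closedBall x ρ) := by
            exact ENNReal.div_le_div_right (measure_mono hdisj) _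
        _ = (volume (closedBall x ρ) - t * volume (closedBall x ρ))
              / volume (closedBall x ρ) := by
            rw [measure_diff hsub measurableSet_closedBall.nullMeasurableSet
              (by rw [hμsmall]; exact ENNReal.mul_ne_top (by rw [ht]; exact ofReal_ne_top) hμfin),
              hμsmall]
        _ = ((1 - t) * volume (closedBall x ρ)) / volume (closedBall x ρ) := by
            rw [ENNReal.sub_mul (fun _ _ => hμfin), one_mul]
        _ = 1 - t := by
            rw [mul_comm, mul_div_assoc, ENNReal.mul_div_cancel hμpos hμfin]
    have hle := le_of_tendsto hx hbound
    have : (1:ℝ≥0∞) - t < 1 := by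
      apply ENNReal.sub_lt_self one_ne_top one_ne_zero htpos.ne'
    exact absurd (lt_of_le_of_lt hle this) (lt_irrefl _)
  have hL0 : L = 0 := by
    ext w
    rcases eq_or_ne w 0 with rfl | hw
    · simp
    · have hnorm : ‖(‖w‖⁻¹ • w : Fin d → ℝ)‖ ≤ 1 := by
        rw [norm_smul, Real.norm_eq_abs, abs_of_nonneg (by positivity)]
        rw [inv_mul_cancel₀ (norm_ne_zero_iff.2 hw)]
      have h0 := key _ hnorm
      rw [_root_.map_smul] at h0
      have hns : (‖w‖⁻¹ : ℝ) ≠ 0 := inv_ne_zero (norm_ne_zero_iff.2 hw)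
      simp only [smul_eq_mul, ContinuousLinearMap.zero_apply]
      rcases mul_eq_zero.1 h0 with h | h
      · exact absurd h hns
      · exact h
  exact hL0

end Density
section Propagate

variable {d : ℕ}

lemma dirDeriv_ae_zero_on_level {h : (Fin d → ℝ) → ℝ}
    (hh : ContDiff ℝ (⊤ : ℕ∞) h) {S : Set (Fin d → ℝ)} (hS : MeasurableSet S) (c : ℝ)
    (hc : ∀ᵐ x ∂(volume.restrict S), h x = c) (v : Fin d → ℝ) :
    ∀ᵐ x ∂(volume.restrict S), dirDeriv v h x = 0 := by
  classical
  set T := S ∩ {x | h x = c} with hT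
  have hmeasC : MeasurableSet {x : Fin d → ℝ | h x = c} :=
    (isClosed_singleton.preimage hh.continuous).measurableSet
  have hTmeas : MeasurableSet T := hS.inter hmeasC
  have h0 : volume (S \ T) = 0 := by
    have h1 : (volume.restrict S) {x : Fin d → ℝ | h x = c}ᶜ = 0 := hc
    rw [Measure.restrict_apply hmeasC.compl] at h1
    have heq : S \ T = {x : Fin d → ℝ | h x = c}ᶜ ∩ S := by
      ext y
      simp only [hT, Set.mem_diff, Set.mem_inter_iff, Set.mem_compl_iff, Set.mem_setOf_eq]
      tauto
    rw [heq]; exact h1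
  have hST : S =ᵐ[volume] T := by
    rw [MeasureTheory.ae_eq_set]
    constructor
    · exact h0
    · have : T \ S = ∅ := by
        rw [Set.diff_eq_empty]; exact Set.inter_subset_left
      rw [this]; exact measure_empty
  have hres : volume.restrict S = volume.restrict T := Measure.restrict_congr_set hST
  rw [hres]
  have hfd := fderiv_ae_zero_on_level (hh.differentiable (by simp)) hTmeas c
    (fun x hx => hx.2)
  filter_upwards [hfd] with x hx
  simp [dirDeriv, hx]

lemma dirDerivIter_ae_zero_of_ae_zero {h : (Fin d → ℝ) → ℝ}
    (hh : ContDiff ℝ (⊤ : ℕ∞) h) {S : Set (Fin d → ℝ)} (hS : MeasurableSet S)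
    (hc : ∀ᵐ x ∂(volume.restrict S), h x = 0) (v : Fin d → ℝ) (k : ℕ) :
    ∀ᵐ x ∂(volume.restrict S), dirDerivIter v k h x = 0 := by
  induction k with
  | zero => exact hc
  | succ k ih =>
      exact dirDeriv_ae_zero_on_level (contDiff_dirDerivIter hh v k) hS 0 ih v

lemma derivAlong_ae_zero_of_ae_zero {h : (Fin d → ℝ) → ℝ}
    (hh : ContDiff ℝ (⊤ : ℕ∞) h) {S : Set (Fin d → ℝ)} (hS : MeasurableSet S)
    (hc : ∀ᵐ x ∂(volume.restrict S), h x = 0) (l : List ((Fin d → ℝ) × ℕ)) :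
    ∀ᵐ x ∂(volume.restrict S), derivAlong l h x = 0 := by
  induction l with
  | nil => exact hc
  | cons vk rest ih =>
      exact dirDerivIter_ae_zero_of_ae_zero (contDiff_derivAlong hh rest) hS ih vk.1 vk.2

lemma dirDerivIter_ae_zero_on_level {h : (Fin d → ℝ) → ℝ}
    (hh : ContDiff ℝ (⊤ : ℕ∞) h) {S : Set (Fin d → ℝ)} (hS : MeasurableSet S) (c : ℝ)
    (hc : ∀ᵐ x ∂(volume.restrict S), h x = c) (v : Fin d → ℝ) {k : ℕ} (hk : k ≠ 0) :
    ∀ᵐ x ∂(volume.restrict S), dirDerivIter v k h x = 0 := by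
  obtain ⟨m, rfl⟩ : ∃ m, k = m + 1 := ⟨k - 1, (Nat.succ_pred_eq_of_pos (Nat.pos_of_ne_zero hk)).symm⟩
  induction m with
  | zero => exact dirDeriv_ae_zero_on_level hh hS c hc v
  | succ m ih =>
      have hm := ih (by simp)
      exact dirDeriv_ae_zero_on_level (contDiff_dirDerivIter hh v (m+1)) hS 0 hm v

lemma derivAlong_ae_zero_on_level {h : (Fin d → ℝ) → ℝ}
    (hh : ContDiff ℝ (⊤ : ℕ∞) h) {S : Set (Fin d → ℝ)} (hS : MeasurableSet S) (c : ℝ)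
    (hc : ∀ᵐ x ∂(volume.restrict S), h x = c) {l : List ((Fin d → ℝ) × ℕ)}
    (hl : ∃ e ∈ l, e.2 ≠ 0) :
    ∀ᵐ x ∂(volume.restrict S), derivAlong l h x = 0 := by
  classical
  induction l with
  | nil => simp at hl
  | cons vk rest ih =>
      by_cases hrest : ∃ e ∈ rest, e.2 ≠ 0
      · have hr := ih hrest
        exact dirDerivIter_ae_zero_of_ae_zero (contDiff_derivAlong hh rest) hS hr vk.1 vk.2
      · push_neg at hrest
        have hre : derivAlong rest h = h := derivAlong_of_mults_zero hrest
        have hk : vk.2 ≠ 0 := by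
          obtain ⟨e, he, hne⟩ := hl
          rcases List.mem_cons.1 he with rfl | hmem
          · exact hne
          · exact absurd (hrest e hmem) hne
        show ∀ᵐ x ∂(volume.restrict S), dirDerivIter vk.1 vk.2 (derivAlong rest h) x = 0
        rw [hre]
        exact dirDerivIter_ae_zero_on_level hh hS c hc vk.1 hk

lemma Dmulti_ae_zero_on_level {β : Fin d → ℕ} (hβ : β ≠ 0) {g : (Fin d → ℝ) → ℝ}
    (hg : ContDiff ℝ (⊤ : ℕ∞) g) {S : Set (Fin d → ℝ)} (hS : MeasurableSet S)
    (hc : ∀ x ∈ S, g x = 1) :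
    ∀ᵐ x ∂(volume.restrict S), Dmulti β g x = 0 := by
  have hc' : ∀ᵐ x ∂(volume.restrict S), g x = 1 := by
    filter_upwards [MeasureTheory.ae_restrict_mem hS] with x hx using hc x hx
  apply derivAlong_ae_zero_on_level hg hS 1 hc'
  obtain ⟨j, hj⟩ := Function.ne_iff.1 hβ
  exact ⟨(Pi.single j (1:ℝ), β j), List.mem_map_of_mem (List.mem_finRange j), hj⟩

end Propagate
section Glue

lemma exists_abs_bound {E : Type*} [NormedAddCommGroup E] [NormedSpace ℝ E]
    {f : E → ℝ} (hf : Continuous f) {K : Set E} (hK : IsCompact K)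
    (hsupp : tsupport f ⊆ K) :
    ∃ C : ℝ, 0 ≤ C ∧ ∀ x, |f x| ≤ C := by
  have hcs : HasCompactSupport f :=
    IsCompact.of_isClosed_subset hK (isClosed_tsupport f) hsupp
  obtain ⟨C, hC⟩ := hcs.exists_bound_of_continuous hf
  exact ⟨max C 0, le_max_right _ _, fun x => le_trans (hC x) (le_max_left _ _)⟩

lemma tsupport_mul_right {E : Type*} [TopologicalSpace E] (a f : E → ℝ) :
    tsupport (fun y => a y * f y) ⊆ tsupport f :=
  closure_mono (fun y hy => by
    simp only [Function.mem_support] at hy ⊢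
    exact fun h0 => hy (by rw [h0, mul_zero]))

lemma pdoAdj_eq_zero {M : ℕ} {ι : Type} [Fintype ι]
    (a : ι → (Fin M → ℝ) → ℝ) (α : ι → Fin M → ℕ) {φ : (Fin M → ℝ) → ℝ}
    {y : Fin M → ℝ} (hy : y ∉ tsupport φ) :
    pdoAdj a α φ y = 0 := by
  unfold pdoAdj
  apply Finset.sum_eq_zero
  intro i _
  have : Dmulti (α i) (fun y => a i y * φ y) y = 0 := by
    apply derivAlong_eq_zero
    exact fun hmem => hy (tsupport_mul_right (a i) φ hmem)
  rw [this, mul_zero]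

lemma Dmulti_eq_zero {M : ℕ} (α : Fin M → ℕ) {φ : (Fin M → ℝ) → ℝ}
    {y : Fin M → ℝ} (hy : y ∉ tsupport φ) :
    Dmulti α φ y = 0 :=
  derivAlong_eq_zero _ hy

lemma continuous_pdoAdj {M : ℕ} {ι : Type} [Fintype ι]
    {a : ι → (Fin M → ℝ) → ℝ} (ha : ∀ i, ContDiff ℝ (⊤ : ℕ∞) (a i))
    (α : ι → Fin M → ℕ) {φ : (Fin M → ℝ) → ℝ} (hφ : ContDiff ℝ (⊤ : ℕ∞) φ) :
    Continuous (pdoAdj a α φ) := by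
  apply continuous_finset_sum
  intro i _
  exact continuous_const.mul (contDiff_Dmulti ((ha i).mul hφ) (α i)).continuous

end Glue
/-- **The saturation theorem (Theorem 2.5 of Biagi–Bonfiglioli).**
Let `P = Σ_{|α|≤d} a_α D^α` be a smooth linear PDO on `ℝ^N` and let
`P̃ = Σ_{|γ|≤d̃} b_γ D^γ` be a smooth linear PDO on `ℝ^N × ℝ^p` lifting `P`.
Assume: (S.1) the formal adjoint of `R = P̃ − P` can be written as
`R* = Σ_{β ≠ 0} r*_{α,β}(z,ξ) D_z^α D_ξ^β` with smooth coefficients;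
(S.2) there is a sequence `θ_j ∈ C_c^∞(ℝ^p, [0,1])` whose sets `{θ_j = 1}` increase to
`ℝ^p`, with `|r*_{α,β}(z,ξ) D_ξ^β θ_j(ξ)| ≤ C_{α,β}(K)` uniformly for `z ∈ K` compact,
`ξ ∈ ℝ^p`, `j ∈ ℕ`.  Suppose `P̃` has a global fundamental solution `Γ̃` with
(i) `η ↦ Γ̃((z,0);(ζ,η)) ∈ L¹(ℝ^p)` for `z ≠ ζ`, and
(ii) `(ζ,η) ↦ Γ̃((z,0);(ζ,η)) ∈ L¹(K × ℝ^p)` for every compact `K ⊆ ℝ^N`.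
Then `Γ(z;ζ) = ∫_{ℝ^p} Γ̃((z,0);(ζ,η)) dη` is a global fundamental solution for `P`. -/
theorem saturation_fundamental_solution
    (N p : ℕ) (hN : 1 ≤ N) (hp : 1 ≤ p)
    -- the operator P on ℝ^N
    (ιP : Type) [Fintype ιP]
    (aP : ιP → (Fin N → ℝ) → ℝ) (αP : ιP → Fin N → ℕ)
    (haP : ∀ i, ContDiff ℝ (⊤ : ℕ∞) (aP i))
    -- the operator P̃ on ℝ^N × ℝ^p
    (ιQ : Type) [Fintype ιQ]
    (bQ : ιQ → (Fin N → ℝ) × (Fin p → ℝ) → ℝ)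
    (αQ : ιQ → Fin N → ℕ) (βQ : ιQ → Fin p → ℕ)
    (hbQ : ∀ i, ContDiff ℝ (⊤ : ℕ∞) (bQ i))
    -- P̃ lifts P : for every smooth f on ℝ^N, P̃(f ∘ π) = (Pf) ∘ π
    (hlift : ∀ f : (Fin N → ℝ) → ℝ, ContDiff ℝ (⊤ : ℕ∞) f →
      ∀ w : (Fin N → ℝ) × (Fin p → ℝ),
        pdoApplyProd bQ αQ βQ (fun v => f v.1) w = pdoApply aP αP f w.1)
    -- (S.1) : the formal adjoint of R = P̃ − P (P acting only in the z variables)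
    -- is Σ r*_{α,β} D_z^α D_ξ^β with every term containing a ξ-derivative
    (ιR : Type) [Fintype ιR]
    (rR : ιR → (Fin N → ℝ) × (Fin p → ℝ) → ℝ)
    (αR : ιR → Fin N → ℕ) (βR : ιR → Fin p → ℕ)
    (hrR : ∀ i, ContDiff ℝ (⊤ : ℕ∞) (rR i))
    (hβR : ∀ i, βR i ≠ 0)
    (hS1 : ∀ ψ : (Fin N → ℝ) × (Fin p → ℝ) → ℝ, ContDiff ℝ (⊤ : ℕ∞) ψ →
      ∀ w : (Fin N → ℝ) × (Fin p → ℝ),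
        pdoAdjProd bQ αQ βQ ψ w
          - pdoAdjProd (fun i (v : (Fin N → ℝ) × (Fin p → ℝ)) => aP i v.1)
              αP (fun _ => (0 : Fin p → ℕ)) ψ w
        = ∑ i, rR i w * DmultiProd (αR i) (βR i) ψ w)
    -- (S.2) : the cut-off sequence
    (θ : ℕ → (Fin p → ℝ) → ℝ)
    (hθsm : ∀ j, ContDiff ℝ (⊤ : ℕ∞) (θ j))
    (hθcs : ∀ j, HasCompactSupport (θ j))
    (hθ01 : ∀ j ξ, θ j ξ ∈ Set.Icc (0 : ℝ) 1)
    (hθmono : Monotone fun j : ℕ => {ξ : Fin p → ℝ | θ j ξ = 1})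
    (hθunion : (⋃ j : ℕ, {ξ : Fin p → ℝ | θ j ξ = 1}) = Set.univ)
    (hS2 : ∀ K : Set (Fin N → ℝ), IsCompact K → ∀ i : ιR,
      ∃ C : ℝ, ∀ z ∈ K, ∀ (ξ : Fin p → ℝ) (j : ℕ),
        |rR i (z, ξ) * Dmulti (βR i) (θ j) ξ| ≤ C)
    -- the global fundamental solution of P̃
    (Γt : (Fin N → ℝ) × (Fin p → ℝ) → (Fin N → ℝ) × (Fin p → ℝ) → ℝ)
    (hΓt : IsFundSolProd bQ αQ βQ Γt)
    -- integrability assumptions (i) and (ii)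
    (hi : ∀ z ζ : Fin N → ℝ, z ≠ ζ →
      Integrable (fun η : Fin p → ℝ => Γt (z, 0) (ζ, η)))
    (hii : ∀ z : Fin N → ℝ, ∀ K : Set (Fin N → ℝ), IsCompact K →
      IntegrableOn (fun w : (Fin N → ℝ) × (Fin p → ℝ) => Γt (z, 0) w)
        (K ×ˢ (Set.univ : Set (Fin p → ℝ)))) :
    IsFundSol aP αP
      (fun z ζ => ∫ η : Fin p → ℝ, Γt (z, 0) (ζ, η)) := by
  classical
  intro z
  constructor
  · -- local integrability of ζ ↦ ∫ η, Γt (z,0) (ζ,η)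
    rw [MeasureTheory.locallyIntegrable_iff]
    intro K hK
    have h1 : IntegrableOn (fun w : (Fin N → ℝ) × (Fin p → ℝ) => Γt (z, 0) w)
        (K ×ˢ (Set.univ : Set (Fin p → ℝ))) volume := hii z K hK
    have h2 : Integrable (fun w : (Fin N → ℝ) × (Fin p → ℝ) => Γt (z, 0) w)
        ((volume : Measure (Fin N → ℝ)).restrict K |>.prod volume) := by
      have heq := Measure.prod_restrict (μ := (volume : Measure (Fin N → ℝ)))
        (ν := (volume : Measure (Fin p → ℝ))) K Set.univ
      rw [Measure.restrict_univ] at heq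
      rw [heq, ← Measure.volume_eq_prod]
      exact h1
    exact h2.integral_prod_left
  · intro φ hφ hφc
    set K : Set (Fin N → ℝ) := tsupport φ with hKdef
    have hKc : IsCompact K := hφc
    -- bounds for the φ-dependent factors
    have hsuppAdj : tsupport (pdoAdj aP αP φ) ⊆ K :=
      closure_minimal (fun y hy => by
        by_contra hyK
        exact Function.mem_support.1 hy (pdoAdj_eq_zero aP αP hyK)) (isClosed_tsupport φ)
    obtain ⟨C0, hC0nn, hC0⟩ := exists_abs_bound (continuous_pdoAdj haP αP hφ) hKc hsuppAdj
    have hCα' : ∀ i : ιR, ∃ C, 0 ≤ C ∧ ∀ x, |Dmulti (αR i) φ x| ≤ C := fun i =>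
      exists_abs_bound (contDiff_Dmulti hφ (αR i)).continuous hKc
        (closure_minimal (fun y hy => by
          by_contra hyK
          exact Function.mem_support.1 hy (Dmulti_eq_zero (αR i) hyK))
          (isClosed_tsupport φ))
    choose Cα hCαnn hCα using hCα'
    choose CR hCR using hS2 K hKc
    set CR' : ιR → ℝ := fun i => max (CR i) 0 with hCR'def
    set C : ℝ := C0 + ∑ i, Cα i * CR' i with hCdef
    have hCRnn : ∀ i, 0 ≤ CR' i := fun i => le_max_right _ _
    have hC0leC : C0 ≤ C := by
      rw [hCdef]
      have : (0:ℝ) ≤ ∑ i, Cα i * CR' i :=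
        Finset.sum_nonneg fun i _ => mul_nonneg (hCαnn i) (hCRnn i)
      linarith
    -- the cut-off test functions on the product space
    set ψ : ℕ → ((Fin N → ℝ) × (Fin p → ℝ)) → ℝ := fun j v => φ v.1 * θ j v.2 with hψdef
    have hψsm : ∀ j, ContDiff ℝ (⊤ : ℕ∞) (ψ j) := fun j =>
      (hφ.comp contDiff_fst).mul ((hθsm j).comp contDiff_snd)
    have hψcs : ∀ j, HasCompactSupport (ψ j) := by
      intro j
      apply HasCompactSupport.intro (hφc.prod (hθcs j))
      rintro ⟨x, ξ⟩ hx
      simp only [Set.mem_prod, not_and_or] at hx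
      rcases hx with hx | hx
      · show φ x * θ j ξ = 0
        rw [image_eq_zero_of_notMem_tsupport hx, zero_mul]
      · show φ x * θ j ξ = 0
        rw [image_eq_zero_of_notMem_tsupport hx, mul_zero]
    have hFS : ∀ j, ∫ v, Γt (z, 0) v * pdoAdjProd bQ αQ βQ (ψ j) v = -(φ z * θ j 0) :=
      fun j => (hΓt (z, 0)).2 (ψ j) (hψsm j) (hψcs j)
    -- the rewritten integrand
    set F : ℕ → ((Fin N → ℝ) × (Fin p → ℝ)) → ℝ := fun j v =>
      Γt (z, 0) v * (pdoAdj aP αP φ v.1 * θ j v.2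
        + ∑ i, rR i v * (Dmulti (αR i) φ v.1 * Dmulti (βR i) (θ j) v.2)) with hFdef
    have hFeq : ∀ j v, Γt (z, 0) v * pdoAdjProd bQ αQ βQ (ψ j) v = F j v := by
      intro j v
      have hs1 := hS1 (ψ j) (hψsm j) v
      have hP : pdoAdjProd (fun i (v : (Fin N → ℝ) × (Fin p → ℝ)) => aP i v.1) αP
          (fun _ => (0 : Fin p → ℕ)) (ψ j) v = pdoAdj aP αP φ v.1 * θ j v.2 := by
        unfold pdoAdjProd pdoAdj
        rw [Finset.sum_mul]
        apply Finset.sum_congr rfl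
        intro i _
        have hfun : (fun w : (Fin N → ℝ) × (Fin p → ℝ) => aP i w.1 * ψ j w)
            = fun w => (fun y => aP i y * φ y) w.1 * θ j w.2 := by
          funext w
          simp only [hψdef]
          ring
        have htens : DmultiProd (αP i) ((0 : Fin p → ℕ))
            (fun w => aP i w.1 * ψ j w) v
            = Dmulti (αP i) (fun y => aP i y * φ y) v.1 * θ j v.2 := by
          rw [hfun, DmultiProd_tensor ((haP i).mul hφ) (hθsm j), Dmulti_zero]
        rw [htens]
        simp only [Pi.zero_apply, Finset.sum_const_zero, Nat.add_zero]
        ring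
      have hR : ∀ i : ιR, DmultiProd (αR i) (βR i) (ψ j) v
          = Dmulti (αR i) φ v.1 * Dmulti (βR i) (θ j) v.2 := fun i =>
        DmultiProd_tensor hφ (hθsm j) (αR i) (βR i) v
      have h2 : pdoAdjProd bQ αQ βQ (ψ j) v
          = pdoAdj aP αP φ v.1 * θ j v.2
            + ∑ i, rR i v * DmultiProd (αR i) (βR i) (ψ j) v := by
        rw [← hP]
        linarith [hs1]
      simp only [hFdef]
      rw [h2]
      congr 1
      congr 1
      exact Finset.sum_congr rfl fun i _ => by rw [hR i]
    -- measurability and domination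
    have hΓae : AEStronglyMeasurable (fun v => Γt (z, 0) v) volume :=
      (hΓt (z, 0)).1.aestronglyMeasurable
    set G : ((Fin N → ℝ) × (Fin p → ℝ)) → ℝ :=
      (K ×ˢ (Set.univ : Set (Fin p → ℝ))).indicator (fun v => C * |Γt (z, 0) v|) with hGdef
    have hKmeas : MeasurableSet (K ×ˢ (Set.univ : Set (Fin p → ℝ))) :=
      (hKc.isClosed.measurableSet).prod MeasurableSet.univ
    have hGint : Integrable G volume := by
      rw [hGdef, MeasureTheory.integrable_indicator_iff hKmeas]
      exact (hii z K hKc).norm.const_mul C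
    have hθabs : ∀ j ξ, |θ j ξ| ≤ 1 := by
      intro j ξ
      obtain ⟨h0, h1⟩ := hθ01 j ξ
      rw [abs_le]
      constructor <;> linarith
    have hFbound : ∀ j v, |F j v| ≤ G v := by
      intro j v
      by_cases hv : v.1 ∈ K
      · have hvmem : v ∈ K ×ˢ (Set.univ : Set (Fin p → ℝ)) := ⟨hv, trivial⟩
        rw [hGdef, Set.indicator_of_mem hvmem]
        simp only [hFdef]
        rw [abs_mul]
        rw [mul_comm (C) (|Γt (z, 0) v|)]
        apply mul_le_mul_of_nonneg_left _ (abs_nonneg _)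
        calc |pdoAdj aP αP φ v.1 * θ j v.2
              + ∑ i, rR i v * (Dmulti (αR i) φ v.1 * Dmulti (βR i) (θ j) v.2)|
            ≤ |pdoAdj aP αP φ v.1 * θ j v.2|
              + |∑ i, rR i v * (Dmulti (αR i) φ v.1 * Dmulti (βR i) (θ j) v.2)| :=
              abs_add_le _ _
          _ ≤ C0 + ∑ i, Cα i * CR' i := by
              apply add_le_add
              · rw [abs_mul]
                calc |pdoAdj aP αP φ v.1| * |θ j v.2| ≤ C0 * 1 :=
                    mul_le_mul (hC0 _) (hθabs j v.2) (abs_nonneg _) hC0nn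
                  _ = C0 := mul_one _
              · calc |∑ i, rR i v * (Dmulti (αR i) φ v.1 * Dmulti (βR i) (θ j) v.2)|
                    ≤ ∑ i, |rR i v * (Dmulti (αR i) φ v.1 * Dmulti (βR i) (θ j) v.2)| :=
                    Finset.abs_sum_le_sum_abs _ _
                  _ ≤ ∑ i, Cα i * CR' i := by
                    apply Finset.sum_le_sum
                    intro i _
                    have hre : |rR i v * (Dmulti (αR i) φ v.1 * Dmulti (βR i) (θ j) v.2)|
                        = |Dmulti (αR i) φ v.1| * |rR i v * Dmulti (βR i) (θ j) v.2| := by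
                      rw [abs_mul, abs_mul, abs_mul]
                      ring
                    rw [hre]
                    apply mul_le_mul (hCα i _) _ (abs_nonneg _) (hCαnn i)
                    have := hCR i v.1 hv v.2 j
                    rw [Prod.mk.eta] at this
                    exact le_trans this (le_max_left _ _)
          _ = C := hCdef.symm
      · have hz1 : pdoAdj aP αP φ v.1 = 0 := pdoAdj_eq_zero aP αP hv
        have hz2 : ∀ i : ιR, Dmulti (αR i) φ v.1 = 0 := fun i => Dmulti_eq_zero (αR i) hv
        have hvnmem : v ∉ K ×ˢ (Set.univ : Set (Fin p → ℝ)) := fun hmem => hv hmem.1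
        rw [hGdef, Set.indicator_of_notMem hvnmem]
        simp only [hFdef]
        rw [hz1, Finset.sum_eq_zero fun i _ => by rw [hz2 i, zero_mul, mul_zero]]
        simp
    have hFmeas : ∀ j, AEStronglyMeasurable (F j) volume := by
      intro j
      simp only [hFdef]
      apply hΓae.mul
      apply Continuous.aestronglyMeasurable
      apply Continuous.add
      · exact ((continuous_pdoAdj haP αP hφ).comp continuous_fst).mul
          ((hθsm j).continuous.comp continuous_snd)
      · apply continuous_finset_sum
        intro i _
        exact (hrR i).continuous.mul
          (((contDiff_Dmulti hφ (αR i)).continuous.comp continuous_fst).mul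
            ((contDiff_Dmulti (hθsm j) (βR i)).continuous.comp continuous_snd))
    -- the limit integrand
    set Flim : ((Fin N → ℝ) × (Fin p → ℝ)) → ℝ := fun v =>
      Γt (z, 0) v * pdoAdj aP αP φ v.1 with hFlimdef
    -- a.e. pointwise convergence
    have hAj : ∀ (j : ℕ) (i : ιR), ∀ᵐ η ∂(volume : Measure (Fin p → ℝ)),
        η ∈ {ξ | θ j ξ = 1} → Dmulti (βR i) (θ j) η = 0 := by
      intro j i
      apply MeasureTheory.ae_imp_of_ae_restrict
      exact Dmulti_ae_zero_on_level (hβR i) (hθsm j)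
        ((isClosed_eq (hθsm j).continuous continuous_const).measurableSet)
        (fun ξ hξ => hξ)
    have hgood : ∀ᵐ η ∂(volume : Measure (Fin p → ℝ)), ∀ (j : ℕ) (i : ιR),
        η ∈ {ξ | θ j ξ = 1} → Dmulti (βR i) (θ j) η = 0 := by
      rw [MeasureTheory.ae_all_iff]
      intro j
      rw [MeasureTheory.ae_all_iff]
      intro i
      exact hAj j i
    have hgoodP : ∀ᵐ v ∂(volume : Measure ((Fin N → ℝ) × (Fin p → ℝ))), ∀ (j : ℕ) (i : ιR),
        v.2 ∈ {ξ | θ j ξ = 1} → Dmulti (βR i) (θ j) v.2 = 0 := by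
      rw [Measure.volume_eq_prod, MeasureTheory.ae_iff]
      rw [MeasureTheory.ae_iff] at hgood
      have hset : {v : (Fin N → ℝ) × (Fin p → ℝ) | ¬ ∀ (j : ℕ) (i : ιR),
            v.2 ∈ {ξ | θ j ξ = 1} → Dmulti (βR i) (θ j) v.2 = 0}
          = (Set.univ : Set (Fin N → ℝ)) ×ˢ {η | ¬ ∀ (j : ℕ) (i : ιR),
            η ∈ {ξ | θ j ξ = 1} → Dmulti (βR i) (θ j) η = 0} := by
        ext v
        simp [Set.mem_prod]
      rw [hset, Measure.prod_prod, hgood, mul_zero]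
    have hptwise : ∀ᵐ v ∂(volume : Measure ((Fin N → ℝ) × (Fin p → ℝ))),
        Tendsto (fun j => F j v) atTop (nhds (Flim v)) := by
      filter_upwards [hgoodP] with v hv
      obtain ⟨j₀, hj₀⟩ : ∃ j₀, v.2 ∈ {ξ | θ j₀ ξ = 1} := by
        have : v.2 ∈ ⋃ j, {ξ : Fin p → ℝ | θ j ξ = 1} := by
          rw [hθunion]; trivial
        exact Set.mem_iUnion.1 this
      have heve : ∀ᶠ j in atTop, F j v = Flim v := by
        filter_upwards [Filter.eventually_ge_atTop j₀] with j hj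
        have hmem : v.2 ∈ {ξ | θ j ξ = 1} := hθmono hj hj₀
        have hθ1 : θ j v.2 = 1 := hmem
        have hzero : ∀ i : ιR, Dmulti (βR i) (θ j) v.2 = 0 := fun i => hv j i hmem
        simp only [hFdef, hFlimdef]
        rw [hθ1, Finset.sum_eq_zero fun i _ => by rw [hzero i, mul_zero, mul_zero]]
        ring
      exact Filter.Tendsto.congr' (heve.mono fun j hj => hj.symm) tendsto_const_nhds
    have hDCT := MeasureTheory.tendsto_integral_of_dominated_convergence G hFmeas hGint
      (fun j => Filter.Eventually.of_forall (fun v => by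
        rw [Real.norm_eq_abs]; exact hFbound j v)) hptwise
    -- the other side of the identity
    have hLHSeq : ∀ j, ∫ v, F j v = -(φ z * θ j 0) := by
      intro j
      rw [← hFS j]
      exact integral_congr_ae (Filter.Eventually.of_forall fun v => (hFeq j v).symm)
    have hRHS : Tendsto (fun j : ℕ => -(φ z * θ j 0)) atTop (nhds (-φ z)) := by
      obtain ⟨j₀, hj₀⟩ : ∃ j₀, (0 : Fin p → ℝ) ∈ {ξ | θ j₀ ξ = 1} := by
        have : (0 : Fin p → ℝ) ∈ ⋃ j, {ξ : Fin p → ℝ | θ j ξ = 1} := by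
          rw [hθunion]; trivial
        exact Set.mem_iUnion.1 this
      have heve : ∀ᶠ j in atTop, -(φ z * θ j 0) = -φ z := by
        filter_upwards [Filter.eventually_ge_atTop j₀] with j hj
        have hθ1 : θ j (0 : Fin p → ℝ) = 1 := hθmono hj hj₀
        rw [hθ1, mul_one]
      exact Filter.Tendsto.congr' (heve.mono fun j hj => hj.symm) tendsto_const_nhds
    have hmain : Tendsto (fun j => ∫ v, F j v) atTop (nhds (-φ z)) := by
      rw [show (fun j => ∫ v, F j v) = fun j : ℕ => -(φ z * θ j 0) from funext hLHSeq]
      exact hRHS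
    have hlim : ∫ v, Flim v = -φ z := tendsto_nhds_unique hDCT hmain
    -- Fubini
    have hFlimInt : Integrable Flim volume := by
      apply Integrable.mono' hGint
        (hΓae.mul (((continuous_pdoAdj haP αP hφ).comp continuous_fst).aestronglyMeasurable))
      apply Filter.Eventually.of_forall
      intro v
      rw [Real.norm_eq_abs]
      show |Γt (z, 0) v * pdoAdj aP αP φ v.1| ≤ G v
      rw [abs_mul]
      by_cases hv : v.1 ∈ K
      · have hvmem : v ∈ K ×ˢ (Set.univ : Set (Fin p → ℝ)) := ⟨hv, trivial⟩
        rw [hGdef, Set.indicator_of_mem hvmem, mul_comm (C) (|Γt (z, 0) v|)]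
        exact mul_le_mul_of_nonneg_left (le_trans (hC0 _) hC0leC) (abs_nonneg _)
      · have hvnmem : v ∉ K ×ˢ (Set.univ : Set (Fin p → ℝ)) := fun hmem => hv hmem.1
        rw [hGdef, Set.indicator_of_notMem hvnmem, pdoAdj_eq_zero aP αP hv]
        simp
    have hsplit : ∫ v, Flim v
        = ∫ ζ, (∫ η, Γt (z, 0) (ζ, η)) * pdoAdj aP αP φ ζ := by
      have h1 : Integrable Flim
          ((volume : Measure (Fin N → ℝ)).prod (volume : Measure (Fin p → ℝ))) := by
        rw [← Measure.volume_eq_prod]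
        exact hFlimInt
      rw [Measure.volume_eq_prod, MeasureTheory.integral_prod _ h1]
      apply integral_congr_ae
      apply Filter.Eventually.of_forall
      intro ζ
      show (∫ η, Γt (z, 0) (ζ, η) * pdoAdj aP αP φ ζ)
          = (∫ η, Γt (z, 0) (ζ, η)) * pdoAdj aP αP φ ζ
      exact integral_mul_const _ _
    calc ∫ y, (∫ η, Γt (z, 0) (y, η)) * pdoAdj aP αP φ y
        = ∫ v, Flim v := hsplit.symm
      _ = -φ z := hlim


end
end

section
/- Let P = Σ_{|α|≤d} a_α(x) D^α be a linear partial differential operator with smooth real coefficients on ℝ^M. Assume that P is hypoelliptic in the following weak sense: whenever u ∈ L¹_loc(ℝ^M) satisfies ∫_{ℝ^M} u(y) P*φ(y) dy = 0 for every φ ∈ C_c^∞(ℝ^M), there exists h ∈ C^∞(ℝ^M) with u = h almost everywhere on ℝ^M. Assume further the following Liouville-type property (a consequence of the Weak Maximum Principle for P): every h ∈ C^∞(ℝ^M) with Ph = 0 pointwise on ℝ^M and h(y) → 0 as ‖y‖ → ∞ vanishes identically. If Γ₁ and Γ₂ are global fundamental solutions for P such that, for every x ∈ ℝ^M and for i =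 1, 2, the function Γ_i(x;·) is continuous on ℝ^M \ {x} and Γ_i(x;y) → 0 as ‖y‖ → ∞, then for every x ∈ ℝ^M one has Γ₁(x;y) = Γ₂(x;y) for every y ∈ ℝ^M with y ≠ x. -/
open MeasureTheory Filter

noncomputable section

namespace FundSolAux

variable {E : Type*} [NormedAddCommGroup E] [NormedSpace ℝ E]

lemma contDiff_dirDeriv {f : E → ℝ} (hf : ContDiff ℝ (⊤ : ℕ∞) f) (v : E) :
    ContDiff ℝ (⊤ : ℕ∞) (dirDeriv v f) :=
  (hf.fderiv_right (by exact_mod_cast le_top)).clm_apply contDiff_const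

lemma contDiff_dirDerivIter {f : E → ℝ} (hf : ContDiff ℝ (⊤ : ℕ∞) f) (v : E) (k : ℕ) :
    ContDiff ℝ (⊤ : ℕ∞) (dirDerivIter v k f) := by
  induction k with
  | zero => exact hf
  | succ k ih => exact contDiff_dirDeriv ih v

lemma contDiff_derivAlong {f : E → ℝ} (hf : ContDiff ℝ (⊤ : ℕ∞) f) (L : List (E × ℕ)) :
    ContDiff ℝ (⊤ : ℕ∞) (derivAlong L f) := by
  induction L with
  | nil => exact hf
  | cons vk rest ih => exact contDiff_dirDerivIter ih vk.1 vk.2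

lemma hcs_dirDeriv {f : E → ℝ} (hf : HasCompactSupport f) (v : E) :
    HasCompactSupport (dirDeriv v f) :=
  hf.fderiv_apply ℝ v

lemma hcs_dirDerivIter {f : E → ℝ} (hf : HasCompactSupport f) (v : E) (k : ℕ) :
    HasCompactSupport (dirDerivIter v k f) := by
  induction k with
  | zero => exact hf
  | succ k ih => exact hcs_dirDeriv ih v

lemma hcs_derivAlong {f : E → ℝ} (hf : HasCompactSupport f) (L : List (E × ℕ)) :
    HasCompactSupport (derivAlong L f) := by
  induction L with
  | nil => exact hf
  | cons vk rest ih => exact hcs_dirDerivIter ih vk.1 vk.2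

lemma dirDeriv_comm {f : E → ℝ} (hf : ContDiff ℝ (⊤ : ℕ∞) f) (v w : E) :
    dirDeriv v (dirDeriv w f) = dirDeriv w (dirDeriv v f) := by
  have hd : Differentiable ℝ (fderiv ℝ f) :=
    (hf.fderiv_right (m := ((⊤ : ℕ∞) : WithTop ℕ∞)) (by exact_mod_cast le_top)).differentiable
      (by simp)
  have key : ∀ u z : E, ∀ x, dirDeriv u (dirDeriv z f) x = fderiv ℝ (fderiv ℝ f) x u z := by
    intro u z x
    have : fderiv ℝ (fun y => fderiv ℝ f y z) x
        = (fderiv ℝ f x).comp (fderiv ℝ (fun _ : E => z) x)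
          + (fderiv ℝ (fderiv ℝ f) x).flip z := by
      exact fderiv_clm_apply (hd x) (differentiableAt_const z)
    show fderiv ℝ (fun y => fderiv ℝ f y z) x u = _
    rw [this]
    simp
  funext x
  rw [key v w x, key w v x]
  exact (hf.contDiffAt.isSymmSndFDerivAt (by rw [minSmoothness_of_isRCLikeNormedField]; exact WithTop.coe_le_coe.2 (le_top : (2 : ℕ∞) ≤ ⊤))) v w

lemma dirDerivIter_dirDeriv_self (v : E) (f : E → ℝ) (k : ℕ) :
    dirDerivIter v k (dirDeriv v f) = dirDeriv v (dirDerivIter v k f) := by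
  induction k with
  | zero => rfl
  | succ k ih =>
    show dirDeriv v (dirDerivIter v k (dirDeriv v f)) = _
    rw [ih]
    rfl

lemma dirDerivIter_dirDeriv_comm {f : E → ℝ} (hf : ContDiff ℝ (⊤ : ℕ∞) f) (v w : E) (k : ℕ) :
    dirDerivIter w k (dirDeriv v f) = dirDeriv v (dirDerivIter w k f) := by
  induction k with
  | zero => rfl
  | succ k ih =>
    show dirDeriv w (dirDerivIter w k (dirDeriv v f)) = dirDeriv v (dirDeriv w (dirDerivIter w k f))
    rw [ih, dirDeriv_comm (contDiff_dirDerivIter hf w k) w v]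

lemma dirDerivIter_comm {f : E → ℝ} (hf : ContDiff ℝ (⊤ : ℕ∞) f) (v w : E) (k l : ℕ) :
    dirDerivIter w l (dirDerivIter v k f) = dirDerivIter v k (dirDerivIter w l f) := by
  induction k generalizing f with
  | zero => rfl
  | succ k ih =>
    show dirDerivIter w l (dirDeriv v (dirDerivIter v k f))
        = dirDeriv v (dirDerivIter v k (dirDerivIter w l f))
    rw [dirDerivIter_dirDeriv_comm (contDiff_dirDerivIter hf v k) v w l, ih hf]

lemma derivAlong_dirDerivIter_comm {f : E → ℝ} (hf : ContDiff ℝ (⊤ : ℕ∞) f) (v : E) (k : ℕ)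
    (L : List (E × ℕ)) :
    derivAlong L (dirDerivIter v k f) = dirDerivIter v k (derivAlong L f) := by
  induction L with
  | nil => rfl
  | cons vk rest ih =>
    show dirDerivIter vk.1 vk.2 (derivAlong rest (dirDerivIter v k f)) = _
    rw [ih, dirDerivIter_comm (contDiff_derivAlong hf rest) v vk.1 k vk.2]
    rfl

variable {M : ℕ}

lemma ibp_dirDeriv (v : Fin M → ℝ) {f g : (Fin M → ℝ) → ℝ}
    (hf : ContDiff ℝ (⊤ : ℕ∞) f) (hg : ContDiff ℝ (⊤ : ℕ∞) g) (hgc : HasCompactSupport g) :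
    ∫ y, f y * dirDeriv v g y = - ∫ y, dirDeriv v f y * g y := by
  have h1 : Integrable (fun y => dirDeriv v f y * g y) volume :=
    ((contDiff_dirDeriv hf v).continuous.mul hg.continuous).integrable_of_hasCompactSupport
      hgc.mul_left
  have h2 : Integrable (fun y => f y * dirDeriv v g y) volume :=
    (hf.continuous.mul (contDiff_dirDeriv hg v).continuous).integrable_of_hasCompactSupport
      (hcs_dirDeriv hgc v).mul_left
  have h3 : Integrable (fun y => f y * g y) volume :=
    (hf.continuous.mul hg.continuous).integrable_of_hasCompactSupport hgc.mul_left
  exact integral_mul_fderiv_eq_neg_fderiv_mul_of_integrable h1 h2 h3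
    (fun x _ => hf.differentiable (by simp) x) (fun x _ => hg.differentiable (by simp) x)

lemma ibp_dirDerivIter (v : Fin M → ℝ) (k : ℕ) {f g : (Fin M → ℝ) → ℝ}
    (hf : ContDiff ℝ (⊤ : ℕ∞) f) (hg : ContDiff ℝ (⊤ : ℕ∞) g) (hgc : HasCompactSupport g) :
    ∫ y, f y * dirDerivIter v k g y = (-1 : ℝ) ^ k * ∫ y, dirDerivIter v k f y * g y := by
  induction k generalizing f with
  | zero => simp [dirDerivIter]
  | succ k ih =>
    have h1 : ∫ y, f y * dirDerivIter v (k + 1) g y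
        = - ∫ y, dirDeriv v f y * dirDerivIter v k g y :=
      ibp_dirDeriv v hf (contDiff_dirDerivIter hg v k) (hcs_dirDerivIter hgc v k)
    rw [h1, ih (contDiff_dirDeriv hf v), dirDerivIter_dirDeriv_self]
    show -((-1 : ℝ) ^ k * ∫ y, dirDerivIter v (k + 1) f y * g y) = _
    rw [pow_succ]
    ring

lemma ibp_derivAlong (L : List ((Fin M → ℝ) × ℕ)) {f g : (Fin M → ℝ) → ℝ}
    (hf : ContDiff ℝ (⊤ : ℕ∞) f) (hg : ContDiff ℝ (⊤ : ℕ∞) g) (hgc : HasCompactSupport g) :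
    ∫ y, f y * derivAlong L g y
      = (-1 : ℝ) ^ ((L.map Prod.snd).sum) * ∫ y, derivAlong L f y * g y := by
  induction L generalizing f with
  | nil => simp [derivAlong]
  | cons vk rest ih =>
    have h1 : ∫ y, f y * derivAlong (vk :: rest) g y
        = (-1 : ℝ) ^ vk.2 * ∫ y, dirDerivIter vk.1 vk.2 f y * derivAlong rest g y :=
      ibp_dirDerivIter vk.1 vk.2 hf (contDiff_derivAlong hg rest) (hcs_derivAlong hgc rest)
    rw [h1, ih (contDiff_dirDerivIter hf vk.1 vk.2),
      derivAlong_dirDerivIter_comm hf vk.1 vk.2 rest]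
    show (-1 : ℝ) ^ vk.2 * ((-1 : ℝ) ^ ((rest.map Prod.snd).sum)
        * ∫ y, derivAlong (vk :: rest) f y * g y) = _
    rw [List.map_cons, List.sum_cons, pow_add]
    ring

lemma ibp_Dmulti (α : Fin M → ℕ) {f g : (Fin M → ℝ) → ℝ}
    (hf : ContDiff ℝ (⊤ : ℕ∞) f) (hg : ContDiff ℝ (⊤ : ℕ∞) g) (hgc : HasCompactSupport g) :
    ∫ y, f y * Dmulti α g y = (-1 : ℝ) ^ (∑ j, α j) * ∫ y, Dmulti α f y * g y := by
  have h := ibp_derivAlong ((List.finRange M).map fun i => (Pi.single i (1 : ℝ), α i)) hf hg hgc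
  have hsum : (((List.finRange M).map fun i => (Pi.single i (1 : ℝ), α i)).map Prod.snd).sum
      = ∑ j, α j := by
    rw [List.map_map, Fin.sum_univ_def]
    rfl
  rw [Dmulti, Dmulti, h, hsum]

lemma contDiff_Dmulti (α : Fin M → ℕ) {f : (Fin M → ℝ) → ℝ} (hf : ContDiff ℝ (⊤ : ℕ∞) f) :
    ContDiff ℝ (⊤ : ℕ∞) (Dmulti α f) :=
  contDiff_derivAlong hf _

lemma hcs_Dmulti (α : Fin M → ℕ) {f : (Fin M → ℝ) → ℝ} (hf : HasCompactSupport f) :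
    HasCompactSupport (Dmulti α f) :=
  hcs_derivAlong hf _

lemma hcs_finsetSum {ι : Type} (s : Finset ι) (f : ι → (Fin M → ℝ) → ℝ)
    (h : ∀ i ∈ s, HasCompactSupport (f i)) :
    HasCompactSupport (fun x => ∑ i ∈ s, f i x) := by
  classical
  induction s using Finset.induction with
  | empty =>
    simp only [Finset.sum_empty]
    exact HasCompactSupport.intro isCompact_empty (fun x _ => rfl)
  | insert b t hni ih =>
    simp only [Finset.sum_insert hni]
    exact (h b (Finset.mem_insert_self b t)).add
      (ih fun i hi => h i (Finset.mem_insert_of_mem hi))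

lemma integral_mul_pdoAdj {ι : Type} [Fintype ι]
    (a : ι → (Fin M → ℝ) → ℝ) (α : ι → Fin M → ℕ) (ha : ∀ i, ContDiff ℝ (⊤ : ℕ∞) (a i))
    {h φ : (Fin M → ℝ) → ℝ} (hh : ContDiff ℝ (⊤ : ℕ∞) h)
    (hφ : ContDiff ℝ (⊤ : ℕ∞) φ) (hφc : HasCompactSupport φ) :
    ∫ y, h y * pdoAdj a α φ y = ∫ y, pdoApply a α h y * φ y := by
  have hg : ∀ i, ContDiff ℝ (⊤ : ℕ∞) (fun y => a i y * φ y) := fun i => (ha i).mul hφ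
  have hgc : ∀ i, HasCompactSupport (fun y => a i y * φ y) := fun i => hφc.mul_left
  have hint1 : ∀ i : ι, Integrable
      (fun y => h y * ((-1 : ℝ) ^ (∑ j, α i j) * Dmulti (α i) (fun z => a i z * φ z) y))
      volume := by
    intro i
    refine Continuous.integrable_of_hasCompactSupport ?_ ?_
    · exact hh.continuous.mul
        (continuous_const.mul (contDiff_Dmulti (α i) (hg i)).continuous)
    · exact HasCompactSupport.mul_left
        ((hcs_Dmulti (α i) (hgc i)).mul_left (f := fun _ => (-1 : ℝ) ^ (∑ j, α i j)))
  have hint2 : ∀ i : ι, Integrable (fun y => (a i y * Dmulti (α i) h y) * φ y) volume := by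
    intro i
    refine Continuous.integrable_of_hasCompactSupport ?_ hφc.mul_left
    exact ((ha i).continuous.mul (contDiff_Dmulti (α i) hh).continuous).mul hφ.continuous
  calc ∫ y, h y * pdoAdj a α φ y
      = ∫ y, ∑ i, h y * ((-1 : ℝ) ^ (∑ j, α i j) * Dmulti (α i) (fun z => a i z * φ z) y) := by
        congr 1; funext y; rw [pdoAdj, Finset.mul_sum]
    _ = ∑ i, ∫ y, h y * ((-1 : ℝ) ^ (∑ j, α i j) * Dmulti (α i) (fun z => a i z * φ z) y) :=
        integral_finset_sum _ (fun i _ => hint1 i)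
    _ = ∑ i, ∫ y, (a i y * Dmulti (α i) h y) * φ y := by
        refine Finset.sum_congr rfl (fun i _ => ?_)
        have e1 : (fun y => h y * ((-1 : ℝ) ^ (∑ j, α i j)
              * Dmulti (α i) (fun z => a i z * φ z) y))
            = fun y => (-1 : ℝ) ^ (∑ j, α i j)
              * (h y * Dmulti (α i) (fun z => a i z * φ z) y) := by
          funext y; ring
        rw [e1, integral_const_mul, ibp_Dmulti (α i) hh (hg i) (hgc i), ← mul_assoc, ← pow_add,
          Even.neg_one_pow ⟨∑ j, α i j, rfl⟩, one_mul]
        congr 1; funext y; ring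
    _ = ∫ y, ∑ i, (a i y * Dmulti (α i) h y) * φ y :=
        (integral_finset_sum _ (fun i _ => hint2 i)).symm
    _ = ∫ y, pdoApply a α h y * φ y := by
        congr 1; funext y; rw [pdoApply, Finset.sum_mul]

end FundSolAux

open FundSolAux in
theorem fundamental_solution_unique'
    (M : ℕ) (hM : 1 ≤ M)
    (ι : Type) [Fintype ι]
    (a : ι → (Fin M → ℝ) → ℝ) (α : ι → Fin M → ℕ)
    (ha : ∀ i, ContDiff ℝ (⊤ : ℕ∞) (a i))
    (hhypo : ∀ u : (Fin M → ℝ) → ℝ, LocallyIntegrable u volume →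
      (∀ φ : (Fin M → ℝ) → ℝ, ContDiff ℝ (⊤ : ℕ∞) φ → HasCompactSupport φ →
        ∫ y, u y * pdoAdj a α φ y = 0) →
      ∃ h : (Fin M → ℝ) → ℝ, ContDiff ℝ (⊤ : ℕ∞) h ∧ u =ᵐ[volume] h)
    (hliouville : ∀ h : (Fin M → ℝ) → ℝ, ContDiff ℝ (⊤ : ℕ∞) h →
      (∀ x, pdoApply a α h x = 0) →
      Tendsto h (cocompact (Fin M → ℝ)) (nhds 0) →
      ∀ y, h y = 0)
    (Γ₁ Γ₂ : (Fin M → ℝ) → (Fin M → ℝ) → ℝ)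
    (hΓ₁l : ∀ x, LocallyIntegrable (Γ₁ x) volume)
    (hΓ₂l : ∀ x, LocallyIntegrable (Γ₂ x) volume)
    (hΓ₁f : ∀ x, ∀ φ : (Fin M → ℝ) → ℝ, ContDiff ℝ (⊤ : ℕ∞) φ → HasCompactSupport φ →
      ∫ y, Γ₁ x y * pdoAdj a α φ y = -φ x)
    (hΓ₂f : ∀ x, ∀ φ : (Fin M → ℝ) → ℝ, ContDiff ℝ (⊤ : ℕ∞) φ → HasCompactSupport φ →
      ∫ y, Γ₂ x y * pdoAdj a α φ y = -φ x)
    (hc₁ : ∀ x, ContinuousOn (Γ₁ x) {x}ᶜ)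
    (hc₂ : ∀ x, ContinuousOn (Γ₂ x) {x}ᶜ)
    (hv₁ : ∀ x, Tendsto (Γ₁ x) (cocompact (Fin M → ℝ)) (nhds 0))
    (hv₂ : ∀ x, Tendsto (Γ₂ x) (cocompact (Fin M → ℝ)) (nhds 0)) :
    ∀ x y : Fin M → ℝ, y ≠ x → Γ₁ x y = Γ₂ x y := by
  intro x y hyx
  have huli : LocallyIntegrable (fun z => Γ₁ x z - Γ₂ x z) volume := (hΓ₁l x).sub (hΓ₂l x)
  have hadjc : ∀ φ : (Fin M → ℝ) → ℝ, ContDiff ℝ (⊤ : ℕ∞) φ → Continuous (pdoAdj a α φ) := by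
    intro φ hφ
    unfold pdoAdj
    exact continuous_finset_sum _ fun i _ =>
      continuous_const.mul (contDiff_Dmulti (α i) ((ha i).mul hφ)).continuous
  have hadjs : ∀ φ : (Fin M → ℝ) → ℝ, HasCompactSupport φ →
      HasCompactSupport (pdoAdj a α φ) := by
    intro φ hφc
    unfold pdoAdj
    exact hcs_finsetSum _ _ fun i _ =>
      HasCompactSupport.mul_left (hcs_Dmulti (α i) hφc.mul_left)
  have hint : ∀ (Γ : (Fin M → ℝ) → ℝ), LocallyIntegrable Γ volume →
      ∀ φ : (Fin M → ℝ) → ℝ, ContDiff ℝ (⊤ : ℕ∞) φ → HasCompactSupport φ →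
      Integrable (fun z => Γ z * pdoAdj a α φ z) volume := by
    intro Γ hΓ φ hφ hφc
    have h1 := hΓ.integrable_smul_left_of_hasCompactSupport (hadjc φ hφ) (hadjs φ hφc)
    simp only [smul_eq_mul] at h1
    have heq : (fun z => Γ z * pdoAdj a α φ z) = fun z => pdoAdj a α φ z * Γ z :=
      funext fun z => mul_comm _ _
    rw [heq]; exact h1
  have hzero : ∀ φ : (Fin M → ℝ) → ℝ, ContDiff ℝ (⊤ : ℕ∞) φ → HasCompactSupport φ →
      ∫ z, (Γ₁ x z - Γ₂ x z) * pdoAdj a α φ z = 0 := by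
    intro φ hφ hφc
    have e : (fun z => (Γ₁ x z - Γ₂ x z) * pdoAdj a α φ z)
        = fun z => Γ₁ x z * pdoAdj a α φ z - Γ₂ x z * pdoAdj a α φ z :=
      funext fun z => by ring
    rw [e, integral_sub (hint _ (hΓ₁l x) φ hφ hφc) (hint _ (hΓ₂l x) φ hφ hφc),
      hΓ₁f x φ hφ hφc, hΓ₂f x φ hφ hφc, sub_self]
  obtain ⟨h, hh, hae⟩ := hhypo _ huli hzero
  have heqOn : Set.EqOn (fun z => Γ₁ x z - Γ₂ x z) h {x}ᶜ := by
    apply MeasureTheory.Measure.eqOn_of_ae_eq (ae_restrict_of_ae hae)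
    · exact (hc₁ x).sub (hc₂ x)
    · exact hh.continuous.continuousOn
    · rw [isOpen_compl_singleton.interior_eq]; exact subset_closure
  have hmem : ({x}ᶜ : Set (Fin M → ℝ)) ∈ cocompact (Fin M → ℝ) :=
    Filter.mem_cocompact.2 ⟨{x}, isCompact_singleton, subset_rfl⟩
  have hev : (fun z => Γ₁ x z - Γ₂ x z) =ᶠ[cocompact (Fin M → ℝ)] h :=
    Filter.eventually_of_mem hmem (fun z hz => heqOn hz)
  have htend : Tendsto h (cocompact (Fin M → ℝ)) (nhds 0) := by
    have h0 : Tendsto (fun z => Γ₁ x z - Γ₂ x z) (cocompact (Fin M → ℝ)) (nhds 0) := by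
      simpa using (hv₁ x).sub (hv₂ x)
    exact h0.congr' hev
  have hPcont : Continuous (pdoApply a α h) := by
    unfold pdoApply
    exact continuous_finset_sum _ fun i _ =>
      (ha i).continuous.mul (contDiff_Dmulti (α i) hh).continuous
  have hint0 : ∀ φ : (Fin M → ℝ) → ℝ, ContDiff ℝ (⊤ : ℕ∞) φ → HasCompactSupport φ →
      ∫ z, pdoApply a α h z * φ z = 0 := by
    intro φ hφ hφc
    rw [← integral_mul_pdoAdj a α ha hh hφ hφc]
    have e : ∫ z, h z * pdoAdj a α φ z = ∫ z, (Γ₁ x z - Γ₂ x z) * pdoAdj a α φ z := by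
      apply integral_congr_ae
      filter_upwards [hae] with z hz
      rw [hz]
    rw [e, hzero φ hφ hφc]
  have hae0 : ∀ᵐ z ∂(volume : Measure (Fin M → ℝ)), pdoApply a α h z = 0 := by
    apply ae_eq_zero_of_integral_contDiff_smul_eq_zero hPcont.locallyIntegrable
    intro g hg hgc
    have e : (fun z => g z • pdoApply a α h z) = fun z => pdoApply a α h z * g z :=
      funext fun z => by simp [mul_comm]
    rw [e]
    exact hint0 g hg hgc
  have hP : ∀ z, pdoApply a α h z = 0 := by
    have := (hPcont.ae_eq_iff_eq volume (continuous_const : Continuous fun _ : Fin M → ℝ => (0:ℝ))).1 hae0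
    intro z; exact congrFun this z
  have hz := hliouville h hh hP htend
  have hy := heqOn (by simpa using hyx : y ∈ ({x}ᶜ : Set (Fin M → ℝ)))
  have hy0 : Γ₁ x y - Γ₂ x y = 0 := by
    have := hy
    simp only [hz y] at this
    exact this
  linarith

/-- **Uniqueness of the fundamental solution vanishing at infinity.**
Let `P = Σ_{|α| ≤ d} a_α D^α` be a linear PDO with smooth coefficients on `ℝ^M` which is
hypoelliptic (every locally integrable distributional solution of `Pu = 0` on `ℝ^M`
coincides a.e. with a smooth function) and enjoys the Liouville-type property that every
smooth global solution of `Ph = 0` vanishing at infinity is identically zero.  If `Γ₁, Γ₂`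
are global fundamental solutions for `P` such that each `Γᵢ(x; ·)` is continuous outside
`x` and vanishes at infinity, then `Γ₁(x; y) = Γ₂(x; y)` for all `y ≠ x`. -/
theorem fundamental_solution_unique
    (M : ℕ) (hM : 1 ≤ M)
    (ι : Type) [Fintype ι]
    (a : ι → (Fin M → ℝ) → ℝ) (α : ι → Fin M → ℕ)
    (ha : ∀ i, ContDiff ℝ (⊤ : ℕ∞) (a i))
    (hhypo : ∀ u : (Fin M → ℝ) → ℝ, LocallyIntegrable u volume →
      (∀ φ : (Fin M → ℝ) → ℝ, ContDiff ℝ (⊤ : ℕ∞) φ → HasCompactSupport φ →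
        ∫ y, u y * pdoAdj a α φ y = 0) →
      ∃ h : (Fin M → ℝ) → ℝ, ContDiff ℝ (⊤ : ℕ∞) h ∧ u =ᵐ[volume] h)
    (hliouville : ∀ h : (Fin M → ℝ) → ℝ, ContDiff ℝ (⊤ : ℕ∞) h →
      (∀ x, pdoApply a α h x = 0) →
      Tendsto h (cocompact (Fin M → ℝ)) (nhds 0) →
      ∀ y, h y = 0)
    (Γ₁ Γ₂ : (Fin M → ℝ) → (Fin M → ℝ) → ℝ)
    (hΓ₁ : IsFundSol a α Γ₁) (hΓ₂ : IsFundSol a α Γ₂)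
    (hc₁ : ∀ x, ContinuousOn (Γ₁ x) {x}ᶜ)
    (hc₂ : ∀ x, ContinuousOn (Γ₂ x) {x}ᶜ)
    (hv₁ : ∀ x, Tendsto (Γ₁ x) (cocompact (Fin M → ℝ)) (nhds 0))
    (hv₂ : ∀ x, Tendsto (Γ₂ x) (cocompact (Fin M → ℝ)) (nhds 0)) :
    ∀ x y : Fin M → ℝ, y ≠ x → Γ₁ x y = Γ₂ x y := by
  exact fundamental_solution_unique' M hM ι a α ha hhypo hliouville Γ₁ Γ₂
    (fun x => (hΓ₁ x).1) (fun x => (hΓ₂ x).1) (fun x => (hΓ₁ x).2) (fun x => (hΓ₂ x).2)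
    hc₁ hc₂ hv₁ hv₂

end
end

section
/- Let p ≥ 1 be an integer and, for each k ∈ {1, …, p}, let q_k : ℝ^{k−1} → ℝ be a smooth function (so q_1 is a constant). Define Ψ : ℝ^p → ℝ^p by Ψ_k(η) = η_k + q_k(η_1, …, η_{k−1}) for k = 1, …, p. Then Ψ is a proper map; in particular ‖Ψ(η)‖ → ∞ as ‖η‖ → ∞. -/
open Filter

/-- **Triangular maps with unit diagonal are proper.**
Let `p ≥ 1` and, for each `k`, let `q_k : ℝ^{k−1} → ℝ` be smooth (depending only on the
first `k−1` coordinates). Define `Ψ : ℝ^p → ℝ^p` by `Ψ_k(η) = η_k + q_k(η_1, …, η_{k−1})`.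
Then `Ψ` is a proper map; in particular `‖Ψ(η)‖ → ∞` as `‖η‖ → ∞`. -/
theorem triangular_map_proper
    (p : ℕ) (hp : 1 ≤ p)
    (q : (k : Fin p) → (Fin k.val → ℝ) → ℝ)
    (hq : ∀ k, ContDiff ℝ (⊤ : ℕ∞) (q k))
    (Ψ : (Fin p → ℝ) → (Fin p → ℝ))
    (hΨ : ∀ (η : Fin p → ℝ) (k : Fin p),
      Ψ η k = η k + q k (fun i => η ⟨i.val, i.isLt.trans k.isLt⟩)) :
    IsProperMap Ψ ∧
      Tendsto (fun η : Fin p → ℝ => ‖Ψ η‖) (cocompact (Fin p → ℝ)) atTop := by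
  have hcont : Continuous Ψ := by
    have hΨeq : Ψ = fun η k => η k + q k (fun i => η ⟨i.val, i.isLt.trans k.isLt⟩) := by
      funext η k; exact hΨ η k
    rw [hΨeq]
    exact continuous_pi fun k => (continuous_apply k).add
      ((hq k).continuous.comp (continuous_pi fun i => continuous_apply _))
  have key : ∀ (K : Set (Fin p → ℝ)), IsCompact K → IsCompact (Ψ ⁻¹' K) := by
    intro K hK
    obtain ⟨R, hR⟩ := (isBounded_iff_forall_norm_le.mp hK.isBounded)
    have bound : ∀ n : ℕ, n ≤ p → ∃ M : ℝ, 0 ≤ M ∧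
        ∀ η, Ψ η ∈ K → ∀ k : Fin p, k.val < n → |η k| ≤ M := by
      intro n
      induction n with
      | zero => exact fun _ => ⟨0, le_refl 0, fun η _ k hk => absurd hk (Nat.not_lt_zero _)⟩
      | succ n ih =>
        intro hn1
        obtain ⟨M, hM0, hM⟩ := ih (Nat.le_of_succ_le hn1)
        set kn : Fin p := ⟨n, hn1⟩ with hkn
        obtain ⟨C, hC⟩ := (isCompact_closedBall (0 : Fin n → ℝ) M).exists_bound_of_continuousOn
          (hq kn).continuous.continuousOn
        refine ⟨max M (R + C), le_trans hM0 (le_max_left _ _), fun η hη k hk => ?_⟩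
        rcases Nat.lt_or_ge k.val n with h | h
        · exact le_trans (hM η hη k h) (le_max_left _ _)
        · have hkeq : k = kn := Fin.ext (Nat.le_antisymm (Nat.lt_succ_iff.mp hk) h)
          subst hkeq
          have harg : (fun i : Fin kn.val => η ⟨i.val, i.isLt.trans kn.isLt⟩) ∈
              Metric.closedBall (0 : Fin kn.val → ℝ) M := by
            rw [Metric.mem_closedBall, dist_zero_right]
            refine pi_norm_le_iff_of_nonneg hM0 |>.mpr fun i => ?_
            rw [Real.norm_eq_abs]
            exact hM η hη _ i.isLt
          have hqb : ‖q kn (fun i : Fin kn.val => η ⟨i.val, i.isLt.trans kn.isLt⟩)‖ ≤ C :=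
            hC _ harg
          have hΨk : η kn = Ψ η kn - q kn (fun i => η ⟨i.val, i.isLt.trans kn.isLt⟩) := by
            rw [hΨ η kn]; ring
          have h1 : |Ψ η kn| ≤ R := le_trans (norm_le_pi_norm (Ψ η) kn) (hR _ hη)
          calc |η kn| ≤ |Ψ η kn| + ‖q kn (fun i => η ⟨i.val, i.isLt.trans kn.isLt⟩)‖ := by
                rw [hΨk]; exact abs_sub _ _
            _ ≤ R + C := add_le_add h1 hqb
            _ ≤ max M (R + C) := le_max_right _ _
    obtain ⟨M, hM0, hM⟩ := bound p le_rfl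
    have hbdd : Bornology.IsBounded (Ψ ⁻¹' K) := by
      refine isBounded_iff_forall_norm_le.mpr ⟨M, fun η hη => ?_⟩
      refine pi_norm_le_iff_of_nonneg hM0 |>.mpr fun k => ?_
      rw [Real.norm_eq_abs]
      exact hM η hη k k.isLt
    exact Metric.isCompact_of_isClosed_isBounded (hK.isClosed.preimage hcont) hbdd
  have hproper : IsProperMap Ψ := isProperMap_iff_isCompact_preimage.mpr ⟨hcont, key⟩
  refine ⟨hproper, tendsto_atTop.2 fun b => ?_⟩
  rw [Filter.eventually_iff, Filter.mem_cocompact]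
  refine ⟨Ψ ⁻¹' Metric.closedBall 0 b, key _ (isCompact_closedBall 0 b), fun x hx => ?_⟩
  simp only [Set.mem_compl_iff, Set.mem_preimage, Metric.mem_closedBall, dist_zero_right,
    not_le] at hx
  exact le_of_lt hx
end

section
/- Let w = (w_1, …, w_{2(1+n)}) = (t, x, s, y) denote the coordinates of (z, ζ) ∈ ℝ^{1+n} × ℝ^{1+n}, and let Z be the first-order operator Zf(z, ζ) = Σ_{j=1}^{2(1+n)} c_j(z, ζ) ∂f/∂w_j with smooth coefficients c_j on ℝ^{2(1+n)}. Define D_λ(z, ζ) := ((λ² t, δ_λ(x)), (λ² s, δ_λ(y))) and assume that Z is D_λ-homogeneous of some degree m > 0, i.e. Z(f ∘ D_λ) = λ^m (Zf) ∘ D_λ for every λ > 0 and every f ∈ C^∞(ℝ^{2(1+n)}). Let g ∈ C^∞(Ω) be E_λ-homogeneous of degree α for some real α < −q*. Then for every (z, ζ) with z ≠ ζ: the function η ↦ Z{(z, ζ) ↦ g(z, ζ, η)}(z, ζ) is integrable on ℝ^p; every partial derivative ∂G/∂w_j of the function G(z, ζ) := ∫_{ℝ^p} g(z, ζ, η) dη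 exists at (z, ζ); and Z can pass under the integral sign, i.e. Σ_j c_j(z, ζ) ∂G/∂w_j(z, ζ) = ∫_{ℝ^p} Σ_j c_j(z, ζ) (∂g/∂w_j)(z, ζ, η) dη. -/
open MeasureTheory

lemma aux_continuous_sup' {X : Type*} [TopologicalSpace X] {ι : Type*}
    (s : Finset ι) (hs : s.Nonempty) (f : ι → X → ℝ) (hf : ∀ i, Continuous (f i)) :
    Continuous fun x => s.sup' hs fun i => f i x := by
  induction hs using Finset.Nonempty.cons_induction with
  | singleton a =>
      simp only [Finset.sup'_singleton]
      exact hf a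
  | cons a s ha hs ih =>
      simp only [Finset.sup'_cons hs]
      exact (hf a).max ih

lemma aux_integrable_max_rpow {γ : ℝ} (hγ : γ < -1) :
    Integrable (fun t : ℝ => (max 1 |t|) ^ γ) := by
  set h : ℝ → ℝ := fun t => (max 1 |t|) ^ γ with hh
  have hcont : Continuous h := by
    rw [continuous_iff_continuousAt]
    intro t
    have h1 : (0:ℝ) < max 1 |t| := lt_of_lt_of_le one_pos (le_max_left _ _)
    exact ((continuous_const.max continuous_abs).continuousAt (x := t)).rpow_const
      (Or.inl h1.ne')
  have hIoi : IntegrableOn h (Set.Ioi (1:ℝ)) := by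
    apply ((integrableOn_Ioi_rpow_of_lt hγ one_pos).congr_fun ?_ measurableSet_Ioi)
    intro t ht
    simp only [Set.mem_Ioi] at ht
    simp [hh, abs_of_pos (lt_trans one_pos ht), max_eq_right ht.le]
  have hIoi' : Integrable ((Set.Ioi (1:ℝ)).indicator h) :=
    (integrable_indicator_iff measurableSet_Ioi).2 hIoi
  have hneg : Integrable (fun t : ℝ => ((Set.Ioi (1:ℝ)).indicator h) (-t)) := hIoi'.comp_neg
  have hIio : IntegrableOn h (Set.Iio (-1:ℝ)) := by
    rw [← integrable_indicator_iff measurableSet_Iio]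
    apply hneg.congr
    filter_upwards with t
    by_cases ht : t < -1
    · rw [Set.indicator_of_mem (show -t ∈ Set.Ioi (1:ℝ) by simp only [Set.mem_Ioi]; linarith) h,
        Set.indicator_of_mem (Set.mem_Iio.2 ht) h]
      simp [hh, abs_neg]
    · rw [Set.indicator_of_notMem (show -t ∉ Set.Ioi (1:ℝ) by simp only [Set.mem_Ioi, not_lt]; linarith [not_lt.1 ht]) h,
        Set.indicator_of_notMem (by simpa using not_lt.1 ht) h]
  have hIcc : IntegrableOn h (Set.Icc (-1:ℝ) 1) := hcont.integrableOn_Icc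
  have : IntegrableOn h Set.univ := by
    have hsub : (Set.univ : Set ℝ) ⊆ Set.Iio (-1) ∪ (Set.Icc (-1) 1 ∪ Set.Ioi 1) := by
      intro t _
      rcases lt_or_ge t (-1) with h1 | h1
      · exact Or.inl h1
      rcases le_or_gt t 1 with h2 | h2
      · exact Or.inr (Or.inl ⟨h1, h2⟩)
      · exact Or.inr (Or.inr h2)
    exact (hIio.union (hIcc.union hIoi)).mono_set hsub
  rwa [integrableOn_univ] at this

lemma aux_integrable_aniso {p' : ℕ} (σs : Fin (p' + 1) → ℝ) (hσs : ∀ j, 1 ≤ σs j)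
    {β : ℝ} (hβ : β < -(∑ j, σs j)) :
    Integrable (fun η : Fin (p' + 1) → ℝ =>
      (max 1 (Finset.univ.sup' ⟨0, Finset.mem_univ 0⟩ fun j => |η j| ^ (σs j)⁻¹)) ^ β) := by
  have hσpos : ∀ j, (0:ℝ) < σs j := fun j => lt_of_lt_of_le one_pos (hσs j)
  set ρ : (Fin (p' + 1) → ℝ) → ℝ :=
    fun η => Finset.univ.sup' ⟨0, Finset.mem_univ 0⟩ fun j => |η j| ^ (σs j)⁻¹ with hρdef
  set M : Fin (p' + 1) → ℝ → ℝ := fun k t => max 1 (|t| ^ (σs k)⁻¹) with hMdef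
  have hMpos : ∀ k t, (0:ℝ) < M k t := fun k t => lt_of_lt_of_le one_pos (le_max_left _ _)
  -- M k t = (max 1 |t|) ^ (σs k)⁻¹
  have hMeq : ∀ k t, M k t = (max 1 |t|) ^ (σs k)⁻¹ := by
    intro k t
    rcases le_total |t| 1 with h | h
    · rw [hMdef]
      simp only
      rw [max_eq_left h, max_eq_left (Real.rpow_le_one (abs_nonneg t) h
        (inv_nonneg.2 (hσpos k).le)), Real.one_rpow]
    · rw [hMdef]
      simp only
      rw [max_eq_right h,
        max_eq_right (Real.one_le_rpow h (inv_nonneg.2 (hσpos k).le))]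
  -- continuity facts
  have hMc : ∀ k (c : ℝ), Continuous fun t : ℝ => (M k t) ^ c := by
    intro k c
    have h1 : Continuous fun t : ℝ => M k t :=
      continuous_const.max (continuous_abs.rpow_const fun t =>
        Or.inr (inv_nonneg.2 (hσpos k).le))
    rw [continuous_iff_continuousAt]
    intro t
    exact (h1.continuousAt).rpow_const (Or.inl (hMpos k t).ne')
  have hρc : Continuous ρ := by
    apply aux_continuous_sup'
    intro j
    exact (continuous_abs.rpow_const fun t =>
      Or.inr (inv_nonneg.2 (hσpos j).le)).comp (continuous_apply j)
  have hρ_nonneg : ∀ η, 0 ≤ ρ η := by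
    intro η
    exact le_trans (Real.rpow_nonneg (abs_nonneg _) _)
      (Finset.le_sup' (f := fun j => |η j| ^ (σs j)⁻¹) (Finset.mem_univ 0))
  -- the majorants
  set f : Fin (p' + 1) → (Fin (p' + 1) → ℝ) → ℝ := fun k η =>
    if ∀ j', |η (k.succAbove j')| ≤ (M k (η k)) ^ σs (k.succAbove j')
    then (M k (η k)) ^ β else 0 with hfdef
  have hf_nonneg : ∀ k η, 0 ≤ f k η := by
    intro k η
    rw [hfdef]
    simp only
    split
    · exact (Real.rpow_pos_of_pos (hMpos k (η k)) β).le
    · exact le_refl 0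
  -- each f k is integrable
  have hfint : ∀ k, Integrable (f k) := by
    intro k
    -- the function on the product space
    set φ : ℝ × (Fin p' → ℝ) → ℝ := fun q =>
      Set.indicator (Set.univ.pi fun j' =>
        Set.Icc (-((M k q.1) ^ σs (k.succAbove j'))) ((M k q.1) ^ σs (k.succAbove j')))
        (fun _ => (M k q.1) ^ β) q.2 with hφdef
    have hcomp : f k = fun η => φ (η k, fun j' => η (k.succAbove j')) := by
      funext η
      rw [hfdef, hφdef]
      simp only [Set.indicator_apply, Set.mem_pi, Set.mem_univ, Set.mem_Icc, forall_const]
      congr 1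
      simp only [eq_iff_iff]
      constructor
      · intro h j' _; exact abs_le.1 (h j')
      · intro h j'; exact abs_le.2 (h j' (Set.mem_univ j'))
    -- measurability of φ
    have hA : ∀ j' : Fin p', IsClosed {q : ℝ × (Fin p' → ℝ) |
        |q.2 j'| ≤ (M k q.1) ^ σs (k.succAbove j')} := by
      intro j'
      exact isClosed_le (((continuous_apply j').comp continuous_snd).abs)
        ((hMc k _).comp continuous_fst)
    have hAmeas : MeasurableSet {q : ℝ × (Fin p' → ℝ) |
        ∀ j', |q.2 j'| ≤ (M k q.1) ^ σs (k.succAbove j')} := by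
      rw [Set.setOf_forall]
      exact MeasurableSet.iInter fun j' => (hA j').measurableSet
    have hφeq : φ = Set.indicator {q : ℝ × (Fin p' → ℝ) |
        ∀ j', |q.2 j'| ≤ (M k q.1) ^ σs (k.succAbove j')} (fun q => (M k q.1) ^ β) := by
      funext q
      simp only [hφdef]
      by_cases h : ∀ j' : Fin p', |q.2 j'| ≤ (M k q.1) ^ σs (k.succAbove j')
      · rw [Set.indicator_of_mem (Set.mem_univ_pi.2 fun j' =>
          Set.mem_Icc.2 (abs_le.1 (h j'))), Set.indicator_of_mem
          (show q ∈ {q : ℝ × (Fin p' → ℝ) |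
            ∀ j', |q.2 j'| ≤ (M k q.1) ^ σs (k.succAbove j')} from h)]
      · rw [Set.indicator_of_notMem (fun hc => h fun j' =>
          abs_le.2 (Set.mem_Icc.1 (Set.mem_univ_pi.1 hc j'))),
          Set.indicator_of_notMem
          (show q ∉ {q : ℝ × (Fin p' → ℝ) |
            ∀ j', |q.2 j'| ≤ (M k q.1) ^ σs (k.succAbove j')} from h)]
    have hφmeas : AEStronglyMeasurable φ ((volume : Measure ℝ).prod volume) := by
      rw [hφeq]
      exact ((((hMc k β).comp continuous_fst).measurable).indicator hAmeas).aestronglyMeasurable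
    -- integrability of φ on the product
    have hφint : Integrable φ ((volume : Measure ℝ).prod volume) := by
      rw [integrable_prod_iff hφmeas]
      constructor
      · -- slices
        apply Filter.Eventually.of_forall
        intro t
        rw [hφdef]
        simp only
        rw [integrable_indicator_iff (MeasurableSet.univ_pi fun j' => measurableSet_Icc)]
        refine integrableOn_const (ne_of_lt ?_)
        rw [volume_pi_pi]
        refine ENNReal.prod_lt_top ?_
        intro j' _
        rw [Real.volume_Icc]
        exact ENNReal.ofReal_lt_top
      · -- the function of t
        have hvol : ∀ t : ℝ, (volume (Set.univ.pi fun j' =>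
            Set.Icc (-((M k t) ^ σs (k.succAbove j'))) ((M k t) ^ σs (k.succAbove j')))).toReal
            = ∏ j' : Fin p', (2 * (M k t) ^ σs (k.succAbove j')) := by
          intro t
          rw [volume_pi_pi]
          rw [ENNReal.toReal_prod]
          congr 1
          funext j'
          rw [Real.volume_Icc, ENNReal.toReal_ofReal (by
            have := (Real.rpow_pos_of_pos (hMpos k t) (σs (k.succAbove j'))).le
            linarith)]
          ring
        -- the iterated-integral bound
        have hkey : (fun t : ℝ => ∫ v : Fin p' → ℝ, ‖φ (t, v)‖)
            = fun t : ℝ => (2:ℝ) ^ p' * (max 1 |t|) ^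
              ((σs k)⁻¹ * ((∑ j' : Fin p', σs (k.succAbove j')) + β)) := by
          funext t
          rw [hφdef]
          simp only
          have hnorm : (fun v : Fin p' → ℝ => ‖Set.indicator (Set.univ.pi fun j' =>
              Set.Icc (-((M k t) ^ σs (k.succAbove j'))) ((M k t) ^ σs (k.succAbove j')))
              (fun _ => (M k t) ^ β) v‖)
              = Set.indicator (Set.univ.pi fun j' =>
              Set.Icc (-((M k t) ^ σs (k.succAbove j'))) ((M k t) ^ σs (k.succAbove j')))
              (fun _ => ‖(M k t) ^ β‖) := by
            funext v
            rw [norm_indicator_eq_indicator_norm]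
          rw [hnorm, integral_indicator_const _
            (MeasurableSet.univ_pi fun j' => measurableSet_Icc)]
          rw [smul_eq_mul, measureReal_def, hvol t]
          rw [Real.norm_eq_abs, abs_of_pos (Real.rpow_pos_of_pos (hMpos k t) β)]
          rw [Finset.prod_mul_distrib, Finset.prod_const]
          rw [← Real.rpow_sum_of_pos (hMpos k t)]
          rw [Finset.card_univ, Fintype.card_fin]
          rw [mul_assoc, ← Real.rpow_add (hMpos k t)]
          rw [hMeq k t]
          rw [← Real.rpow_mul (le_trans zero_le_one (le_max_left 1 |t|))]
        rw [hkey]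
        apply Integrable.const_mul
        apply aux_integrable_max_rpow
        -- exponent < -1
        have hsum : σs k + ∑ j' : Fin p', σs (k.succAbove j') = ∑ j, σs j :=
          (Fin.sum_univ_succAbove σs k).symm
        have h1 : (∑ j' : Fin p', σs (k.succAbove j')) + β < -σs k := by
          have : β < -(σs k + ∑ j' : Fin p', σs (k.succAbove j')) := by rw [hsum]; exact hβ
          linarith
        have h2 : (σs k)⁻¹ * ((∑ j' : Fin p', σs (k.succAbove j')) + β)
            < (σs k)⁻¹ * (-σs k) :=
          mul_lt_mul_of_pos_left h1 (inv_pos.2 (hσpos k))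
        rwa [mul_neg, inv_mul_cancel₀ (hσpos k).ne'] at h2
    -- transport back
    have hmp := MeasureTheory.volume_preserving_piFinSuccAbove (fun _ : Fin (p' + 1) => ℝ) k
    have := (hmp.integrable_comp_emb
      (MeasurableEquiv.measurableEmbedding _)).2 hφint
    rw [hcomp]
    convert this using 1
    funext η
    rfl
  -- pointwise bound and conclusion
  have hTcont : Continuous fun η : Fin (p' + 1) → ℝ => (max 1 (ρ η)) ^ β := by
    rw [continuous_iff_continuousAt]
    intro η
    have h1 : (0:ℝ) < max 1 (ρ η) := lt_of_lt_of_le one_pos (le_max_left _ _)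
    exact ((continuous_const.max hρc).continuousAt).rpow_const (Or.inl h1.ne')
  have hbound : ∀ η : Fin (p' + 1) → ℝ,
      ‖(max 1 (ρ η)) ^ β‖ ≤ ∑ k, f k η := by
    intro η
    obtain ⟨k, -, hk⟩ := Finset.exists_max_image Finset.univ
      (fun j => |η j| ^ (σs j)⁻¹) ⟨0, Finset.mem_univ 0⟩
    have hρeq : ρ η = |η k| ^ (σs k)⁻¹ := by
      apply le_antisymm
      · exact Finset.sup'_le _ _ fun j _ => hk j (Finset.mem_univ j)
      · exact Finset.le_sup' (f := fun j => |η j| ^ (σs j)⁻¹) (Finset.mem_univ k)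
    have hMρ : M k (η k) = max 1 (ρ η) := by rw [hρeq]
    have hcond : ∀ j', |η (k.succAbove j')| ≤ (M k (η k)) ^ σs (k.succAbove j') := by
      intro j'
      set j := k.succAbove j'
      have h1 : |η j| ^ (σs j)⁻¹ ≤ M k (η k) := by
        rw [hMρ]
        exact le_trans (by rw [hρeq]; exact hk j (Finset.mem_univ j))
          (le_max_right _ _)
      have h2 : (|η j| ^ (σs j)⁻¹) ^ σs j ≤ (M k (η k)) ^ σs j :=
        Real.rpow_le_rpow (Real.rpow_nonneg (abs_nonneg _) _) h1 (hσpos j).le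
      rwa [← Real.rpow_mul (abs_nonneg _), inv_mul_cancel₀ (hσpos j).ne',
        Real.rpow_one] at h2
    have hfk : f k η = (max 1 (ρ η)) ^ β := by
      rw [hfdef]
      simp only
      rw [if_pos hcond, hMρ]
    rw [Real.norm_eq_abs, abs_of_nonneg (Real.rpow_nonneg
      (le_trans zero_le_one (le_max_left _ _)) _)]
    calc (max 1 (ρ η)) ^ β = f k η := hfk.symm
      _ ≤ ∑ k, f k η := Finset.single_le_sum (fun j _ => hf_nonneg j η) (Finset.mem_univ k)
  exact Integrable.mono' (integrable_finset_sum _ fun k _ => hfint k)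
    hTcont.aestronglyMeasurable (Filter.Eventually.of_forall hbound)


abbrev Wsp (n : ℕ) := (ℝ × (Fin n → ℝ)) × (ℝ × (Fin n → ℝ))

noncomputable section

/-- The parabolic dilation `D_λ(z, ζ) = ((λ²t, δ_λ x), (λ²s, δ_λ y))` on
`ℝ^{1+n} × ℝ^{1+n}`. -/
def Ddil {n : ℕ} (σ : Fin n → ℝ) (lam : ℝ)
    (w : (ℝ × (Fin n → ℝ)) × (ℝ × (Fin n → ℝ))) :
    (ℝ × (Fin n → ℝ)) × (ℝ × (Fin n → ℝ)) :=
  ((lam ^ 2 * w.1.1, fun i => lam ^ σ i * w.1.2 i),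
   (lam ^ 2 * w.2.1, fun i => lam ^ σ i * w.2.2 i))

/-- The dilation `E_λ(z, ζ, η) = (D_λ(z, ζ), δ*_λ(η))` on `(ℝ^{1+n} × ℝ^{1+n}) × ℝ^p`. -/
def Edil {n p : ℕ} (σ : Fin n → ℝ) (σs : Fin p → ℝ) (lam : ℝ)
    (w : ((ℝ × (Fin n → ℝ)) × (ℝ × (Fin n → ℝ))) × (Fin p → ℝ)) :
    ((ℝ × (Fin n → ℝ)) × (ℝ × (Fin n → ℝ))) × (Fin p → ℝ) :=
  (Ddil σ lam w.1, fun j => lam ^ σs j * w.2 j)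

/-- The open set `Ω = {((z, ζ), η) : (z, 0) ≠ (ζ, η)}`. -/
def OmegaSet (n p : ℕ) :
    Set (((ℝ × (Fin n → ℝ)) × (ℝ × (Fin n → ℝ))) × (Fin p → ℝ)) :=
  {w | ((w.1.1, (0 : Fin p → ℝ)) : (ℝ × (Fin n → ℝ)) × (Fin p → ℝ)) ≠ (w.1.2, w.2)}

/-- **Differentiation under the integral sign in the saturation variables.**
Let `Z` be a smooth first-order operator `Zf(z,ζ) = Σ_j c_j(z,ζ) ∂f/∂w_j` (encoded by the
smooth coefficient vector field `c`, so that `Zf(w) = fderiv f w (c w)`), `D_λ`-homogeneous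
of degree `m > 0`, and let `g ∈ C^∞(Ω)` be `E_λ`-homogeneous of degree `α < −q*`.  Then for
every `z ≠ ζ`: the function `η ↦ Zg(·, ·, η)(z, ζ)` is integrable on `ℝ^p`; the function
`G(z, ζ) = ∫ g(z, ζ, η) dη` is differentiable at `(z, ζ)` (so all its partial derivatives
exist there); and `Z` passes under the integral sign: `ZG(z,ζ) = ∫ Zg(·, ·, η)(z,ζ) dη`. -/
theorem vectorField_passes_under_integral
    (n p : ℕ) (hn : 1 ≤ n) (hp : 1 ≤ p)
    (σ : Fin n → ℝ) (σs : Fin p → ℝ)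
    (hσ : ∀ i, 1 ≤ σ i) (hσs : ∀ j, 1 ≤ σs j)
    (g : ((ℝ × (Fin n → ℝ)) × (ℝ × (Fin n → ℝ))) × (Fin p → ℝ) → ℝ)
    (α : ℝ) (hα : α < -(∑ j, σs j))
    (hg : ContDiffOn ℝ (⊤ : ℕ∞) g (OmegaSet n p))
    (hghom : ∀ lam : ℝ, 0 < lam → ∀ w ∈ OmegaSet n p,
      g (Edil σ σs lam w) = lam ^ α * g w)
    (c : (ℝ × (Fin n → ℝ)) × (ℝ × (Fin n → ℝ)) →
         (ℝ × (Fin n → ℝ)) × (ℝ × (Fin n → ℝ)))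
    (hc : ContDiff ℝ (⊤ : ℕ∞) c)
    (m : ℝ) (hm : 0 < m)
    (hZhom : ∀ lam : ℝ, 0 < lam →
      ∀ f : (ℝ × (Fin n → ℝ)) × (ℝ × (Fin n → ℝ)) → ℝ, ContDiff ℝ (⊤ : ℕ∞) f →
      ∀ w : (ℝ × (Fin n → ℝ)) × (ℝ × (Fin n → ℝ)),
        fderiv ℝ (fun w' => f (Ddil σ lam w')) w (c w)
          = lam ^ m * fderiv ℝ f (Ddil σ lam w) (c (Ddil σ lam w))) :
    ∀ z ζ : ℝ × (Fin n → ℝ), z ≠ ζ →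
      Integrable (fun η : Fin p → ℝ =>
        fderiv ℝ (fun w => g (w, η)) (z, ζ) (c (z, ζ))) ∧
      DifferentiableAt ℝ
        (fun w : (ℝ × (Fin n → ℝ)) × (ℝ × (Fin n → ℝ)) =>
          ∫ η : Fin p → ℝ, g (w, η)) (z, ζ) ∧
      fderiv ℝ
          (fun w : (ℝ × (Fin n → ℝ)) × (ℝ × (Fin n → ℝ)) =>
            ∫ η : Fin p → ℝ, g (w, η)) (z, ζ) (c (z, ζ))
        = ∫ η : Fin p → ℝ, fderiv ℝ (fun w => g (w, η)) (z, ζ) (c (z, ζ)) := by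
  obtain ⟨p', rfl⟩ : ∃ p', p = p' + 1 := ⟨p - 1, (Nat.succ_pred_eq_of_pos hp).symm⟩
  intro z ζ hzζ
  have hone : (1 : WithTop ℕ∞) ≤ ((⊤ : ℕ∞) : WithTop ℕ∞) := by exact_mod_cast (le_top : (1:ℕ∞) ≤ ⊤)
  have hσpos : ∀ i, (0:ℝ) < σ i := fun i => lt_of_lt_of_le one_pos (hσ i)
  have hσspos : ∀ j, (0:ℝ) < σs j := fun j => lt_of_lt_of_le one_pos (hσs j)
  -- openness of Ω and membership criteria
  have hΩ : IsOpen (OmegaSet n (p' + 1)) := by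
    have : OmegaSet n (p' + 1) = {w : Wsp n × (Fin (p' + 1) → ℝ) |
        (fun w : Wsp n × (Fin (p' + 1) → ℝ) =>
          ((w.1.1, (0 : Fin (p' + 1) → ℝ)) : (ℝ × (Fin n → ℝ)) × (Fin (p' + 1) → ℝ))) w
        ≠ (fun w : Wsp n × (Fin (p' + 1) → ℝ) => ((w.1.2, w.2) :
          (ℝ × (Fin n → ℝ)) × (Fin (p' + 1) → ℝ))) w} := rfl
    rw [this]
    exact isOpen_ne_fun (by fun_prop) (by fun_prop)
  have hmem : ∀ (w : Wsp n) (η : Fin (p' + 1) → ℝ), w.1 ≠ w.2 → ((w, η) : Wsp n × (Fin (p' + 1) → ℝ)) ∈ OmegaSet n (p' + 1) :=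
    fun w η hne hc => hne (congrArg Prod.fst hc)
  have hmem' : ∀ (w : Wsp n) (η : Fin (p' + 1) → ℝ), η ≠ 0 → ((w, η) : Wsp n × (Fin (p' + 1) → ℝ)) ∈ OmegaSet n (p' + 1) :=
    fun w η hne hc => hne ((congrArg Prod.snd hc).symm)
  -- smoothness consequences
  have hgdiff : ∀ q ∈ OmegaSet n (p' + 1), DifferentiableAt ℝ g q := fun q hq =>
    (hg.differentiableOn (by simp)).differentiableAt (hΩ.mem_nhds hq)
  have hgcont : ContinuousOn g (OmegaSet n (p' + 1)) := hg.continuousOn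
  have hfc : ContinuousOn (fderiv ℝ g) (OmegaSet n (p' + 1)) :=
    hg.continuousOn_fderiv_of_isOpen hΩ hone
  set F' : Wsp n → (Fin (p' + 1) → ℝ) → (Wsp n →L[ℝ] ℝ) := fun w η =>
    (fderiv ℝ g (w, η)).comp (ContinuousLinearMap.inl ℝ (Wsp n) (Fin (p' + 1) → ℝ)) with hF'def
  have hasF : ∀ (w : Wsp n) (η : Fin (p' + 1) → ℝ), ((w, η) : Wsp n × (Fin (p' + 1) → ℝ)) ∈ OmegaSet n (p' + 1) →
      HasFDerivAt (fun w' => g (w', η)) (F' w η) w := fun w η hq =>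
    ((hgdiff _ hq).hasFDerivAt).comp w (hasFDerivAt_prodMk_left w η)
  -- the ball around (z, ζ)
  have hVopen : IsOpen {w : Wsp n | w.1 ≠ w.2} := isOpen_ne_fun continuous_fst continuous_snd
  obtain ⟨ε, hε, hball⟩ : ∃ ε > 0, Metric.closedBall ((z, ζ) : Wsp n) ε ⊆ {w : Wsp n | w.1 ≠ w.2} := by
    rcases Metric.isOpen_iff.1 hVopen (z, ζ) hzζ with ⟨r, hr, hsub⟩
    exact ⟨r / 2, by linarith, fun w hw => hsub (Metric.mem_ball.2
      (lt_of_le_of_lt (Metric.mem_closedBall.1 hw) (by linarith)))⟩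
  -- the anisotropic gauge
  set ρ : (Fin (p' + 1) → ℝ) → ℝ :=
    fun η => Finset.univ.sup' ⟨0, Finset.mem_univ 0⟩ fun j => |η j| ^ (σs j)⁻¹ with hρdef
  have hρc : Continuous ρ := by
    apply aux_continuous_sup'
    intro j
    exact (continuous_abs.rpow_const fun t =>
      Or.inr (inv_nonneg.2 (hσspos j).le)).comp (continuous_apply j)
  have habs1 : ∀ η : Fin (p' + 1) → ℝ, ρ η ≤ 1 → ∀ j, |η j| ≤ 1 := by
    intro η h j
    have h1 : |η j| ^ (σs j)⁻¹ ≤ 1 :=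
      le_trans (Finset.le_sup' (f := fun j => |η j| ^ (σs j)⁻¹) (Finset.mem_univ j)) h
    have h2 := Real.rpow_le_rpow (Real.rpow_nonneg (abs_nonneg _) _) h1 (hσspos j).le
    rwa [← Real.rpow_mul (abs_nonneg _), inv_mul_cancel₀ (hσspos j).ne',
      Real.rpow_one, Real.one_rpow] at h2
  have hρ0 : ρ (0 : Fin (p' + 1) → ℝ) = 0 := by
    have hz : ∀ j : Fin (p' + 1), |(0 : Fin (p' + 1) → ℝ) j| ^ (σs j)⁻¹ = 0 := fun j => by
      simp [Real.zero_rpow (inv_ne_zero (hσspos j).ne')]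
    apply le_antisymm
    · exact Finset.sup'_le _ _ fun j _ => le_of_eq (hz j)
    · exact le_trans (le_of_eq (hz 0).symm)
        (Finset.le_sup' (f := fun j => |(0:Fin (p' + 1) → ℝ) j| ^ (σs j)⁻¹) (Finset.mem_univ 0))
  have hS0 : ∀ η : Fin (p' + 1) → ℝ, ρ η = 1 → η ≠ 0 := by
    intro η h h0
    rw [h0, hρ0] at h
    norm_num at h
  have hρsmul : ∀ μ : ℝ, 0 ≤ μ → ∀ η : Fin (p' + 1) → ℝ,
      ρ (fun j => μ ^ σs j * η j) = μ * ρ η := by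
    intro μ hμ η
    have hmain := Finset.comp_sup'_eq_sup'_comp
      (⟨0, Finset.mem_univ 0⟩ : (Finset.univ : Finset (Fin (p' + 1))).Nonempty)
      (f := fun j => |η j| ^ (σs j)⁻¹) (fun x : ℝ => μ * x)
      (fun x y => mul_max_of_nonneg x y hμ)
    rw [hρdef]
    refine Eq.trans (Finset.sup'_congr _ rfl ?_) hmain.symm
    intro j _
    rw [abs_mul, abs_of_nonneg (Real.rpow_nonneg hμ _),
      Real.mul_rpow (Real.rpow_nonneg hμ _) (abs_nonneg _),
      ← Real.rpow_mul hμ, mul_inv_cancel₀ (hσspos j).ne', Real.rpow_one]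
    rfl
  -- the linear dilation as a continuous linear map
  set T : ℝ → (ℝ × (Fin n → ℝ)) →L[ℝ] (ℝ × (Fin n → ℝ)) := fun μ =>
    ((μ ^ 2) • (ContinuousLinearMap.fst ℝ ℝ (Fin n → ℝ))).prod
      (ContinuousLinearMap.pi fun i => (μ ^ σ i) •
        ((ContinuousLinearMap.proj i).comp (ContinuousLinearMap.snd ℝ ℝ (Fin n → ℝ))))
    with hTdef
  set DL : ℝ → Wsp n →L[ℝ] Wsp n := fun μ => (T μ).prodMap (T μ) with hDLdef
  have hDL : ∀ (μ : ℝ) (w : Wsp n), DL μ w = Ddil σ μ w := fun μ w => rfl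
  have hTle : ∀ μ : ℝ, 0 ≤ μ → μ ≤ 1 → ∀ v : ℝ × (Fin n → ℝ), ‖T μ v‖ ≤ ‖v‖ := by
    intro μ h0 h1 v
    rw [Prod.norm_def]
    apply max_le
    · have : ‖μ ^ 2 * v.1‖ = μ ^ 2 * ‖v.1‖ := by
        rw [norm_mul, Real.norm_eq_abs (μ ^ 2), abs_of_nonneg (sq_nonneg μ)]
      calc ‖(T μ v).1‖ = μ ^ 2 * ‖v.1‖ := this
        _ ≤ 1 * ‖v.1‖ := by
            apply mul_le_mul_of_nonneg_right _ (norm_nonneg _)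
            calc μ ^ 2 ≤ 1 ^ 2 := pow_le_pow_left₀ h0 h1 2
              _ = 1 := one_pow 2
        _ = ‖v.1‖ := one_mul _
        _ ≤ ‖v‖ := norm_fst_le v
    · rw [show ((T μ v).2 : Fin n → ℝ) = fun i => μ ^ σ i * v.2 i from rfl]
      rw [pi_norm_le_iff_of_nonneg (norm_nonneg v)]
      intro i
      rw [Real.norm_eq_abs, abs_mul, abs_of_nonneg (Real.rpow_nonneg h0 _)]
      calc μ ^ σ i * |v.2 i| ≤ 1 * |v.2 i| :=
            mul_le_mul_of_nonneg_right (Real.rpow_le_one h0 h1 (hσpos i).le) (abs_nonneg _)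
        _ = |v.2 i| := one_mul _
        _ = ‖v.2 i‖ := (Real.norm_eq_abs _).symm
        _ ≤ ‖v.2‖ := norm_le_pi_norm v.2 i
        _ ≤ ‖v‖ := norm_snd_le v
  have hDLle : ∀ μ : ℝ, 0 ≤ μ → μ ≤ 1 → ∀ w : Wsp n, ‖DL μ w‖ ≤ ‖w‖ := by
    intro μ h0 h1 w
    rw [show DL μ w = (T μ w.1, T μ w.2) from rfl, Prod.norm_def]
    exact max_le (le_trans (hTle μ h0 h1 w.1) (norm_fst_le w))
      (le_trans (hTle μ h0 h1 w.2) (norm_snd_le w))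
  -- scaling identity
  have hED : ∀ lam : ℝ, 0 < lam → ∀ (w : Wsp n) (η : Fin (p' + 1) → ℝ),
      Edil σ σs lam (Ddil σ lam⁻¹ w, fun j => lam⁻¹ ^ σs j * η j) = (w, η) := by
    intro lam hlam w η
    have hpow : ∀ cc : ℝ, lam ^ cc * lam⁻¹ ^ cc = 1 := fun cc => by
      rw [← Real.mul_rpow hlam.le (inv_nonneg.2 hlam.le), mul_inv_cancel₀ hlam.ne',
        Real.one_rpow]
    have hpow2 : lam ^ 2 * lam⁻¹ ^ 2 = (1:ℝ) := by
      rw [← mul_pow, mul_inv_cancel₀ hlam.ne', one_pow]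
    simp only [Edil, Ddil]
    refine Prod.ext (Prod.ext ?_ ?_) ?_
    · refine Prod.ext ?_ ?_
      · show lam ^ 2 * (lam⁻¹ ^ 2 * w.1.1) = w.1.1
        rw [← mul_assoc, hpow2, one_mul]
      · show (fun i => lam ^ σ i * (lam⁻¹ ^ σ i * w.1.2 i)) = w.1.2
        funext i
        rw [← mul_assoc, hpow (σ i), one_mul]
    · refine Prod.ext ?_ ?_
      · show lam ^ 2 * (lam⁻¹ ^ 2 * w.2.1) = w.2.1
        rw [← mul_assoc, hpow2, one_mul]
      · show (fun i => lam ^ σ i * (lam⁻¹ ^ σ i * w.2.2 i)) = w.2.2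
        funext i
        rw [← mul_assoc, hpow (σ i), one_mul]
    · show (fun j => lam ^ σs j * (lam⁻¹ ^ σs j * η j)) = η
      funext j
      rw [← mul_assoc, hpow (σs j), one_mul]
  -- the compact bounds
  set Φ : Wsp n × (Fin (p' + 1) → ℝ) → (Wsp n →L[ℝ] ℝ) × ℝ := fun q =>
    ((fderiv ℝ g q).comp (ContinuousLinearMap.inl ℝ (Wsp n) (Fin (p' + 1) → ℝ)), g q) with hΦdef
  have hΦc : ContinuousOn Φ (OmegaSet n (p' + 1)) :=
    (hfc.clm_comp continuousOn_const).prodMk hgcont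
  -- K₁ : small η
  have hB1 : IsCompact {η : Fin (p' + 1) → ℝ | ρ η ≤ 1} := by
    apply IsCompact.of_isClosed_subset (isCompact_closedBall (0 : Fin (p' + 1) → ℝ) 1)
      (isClosed_le hρc continuous_const)
    intro η hη
    rw [Metric.mem_closedBall, dist_zero_right]
    rw [pi_norm_le_iff_of_nonneg zero_le_one]
    intro j
    rw [Real.norm_eq_abs]
    exact habs1 η hη j
  have hK1 : IsCompact ((Metric.closedBall ((z, ζ) : Wsp n) ε) ×ˢ {η : Fin (p' + 1) → ℝ | ρ η ≤ 1}) :=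
    (isCompact_closedBall _ _).prod hB1
  have hK1sub : ((Metric.closedBall ((z, ζ) : Wsp n) ε) ×ˢ {η : Fin (p' + 1) → ℝ | ρ η ≤ 1})
      ⊆ OmegaSet n (p' + 1) := by
    rintro ⟨w, η⟩ ⟨hw, -⟩
    exact hmem w η (hball hw)
  obtain ⟨C₁, hC₁⟩ := hK1.exists_bound_of_continuousOn (hΦc.mono hK1sub)
  -- K₂ : the sphere
  have hS : IsCompact {η : Fin (p' + 1) → ℝ | ρ η = 1} := by
    apply IsCompact.of_isClosed_subset (isCompact_closedBall (0 : Fin (p' + 1) → ℝ) 1)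
      (isClosed_eq hρc continuous_const)
    intro η hη
    rw [Metric.mem_closedBall, dist_zero_right]
    rw [pi_norm_le_iff_of_nonneg zero_le_one]
    intro j
    rw [Real.norm_eq_abs]
    exact habs1 η (le_of_eq hη) j
  have hK2 : IsCompact ((Metric.closedBall (0 : Wsp n) (‖((z, ζ) : Wsp n)‖ + ε))
      ×ˢ {η : Fin (p' + 1) → ℝ | ρ η = 1}) :=
    (isCompact_closedBall _ _).prod hS
  have hK2sub : ((Metric.closedBall (0 : Wsp n) (‖((z, ζ) : Wsp n)‖ + ε))
      ×ˢ {η : Fin (p' + 1) → ℝ | ρ η = 1}) ⊆ OmegaSet n (p' + 1) := by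
    rintro ⟨w, η⟩ ⟨-, hη⟩
    exact hmem' w η (hS0 η hη)
  obtain ⟨C₂, hC₂⟩ := hK2.exists_bound_of_continuousOn (hΦc.mono hK2sub)
  -- the dominating function
  set C' : ℝ := max (max C₁ C₂) 0 with hC'def
  have hC₁le : C₁ ≤ C' := le_trans (le_max_left _ _) (le_max_left _ _)
  have hC₂le : C₂ ≤ C' := le_trans (le_max_right _ _) (le_max_left _ _)
  set bound : (Fin (p' + 1) → ℝ) → ℝ := fun η => C' * (max 1 (ρ η)) ^ α with hbounddef
  have hboundInt : Integrable bound := by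
    have := (aux_integrable_aniso σs hσs (β := α) hα).const_mul C'
    exact this
  -- the two-sided pointwise bound
  have hbd : ∀ (η : Fin (p' + 1) → ℝ), ∀ w' ∈ Metric.closedBall ((z, ζ) : Wsp n) ε,
      ‖F' w' η‖ ≤ bound η ∧ |g (w', η)| ≤ bound η := by
    intro η w' hw'
    rcases le_or_gt (ρ η) 1 with hρ1 | hρ1
    · have hq : ((w', η) : Wsp n × (Fin (p' + 1) → ℝ)) ∈
          (Metric.closedBall ((z, ζ) : Wsp n) ε) ×ˢ {η : Fin (p' + 1) → ℝ | ρ η ≤ 1} := ⟨hw', hρ1⟩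
      have h := hC₁ _ hq
      have hbη : bound η = C' := by
        rw [hbounddef]
        simp only
        rw [max_eq_left hρ1, Real.one_rpow, mul_one]
      constructor
      · rw [hbη]
        exact le_trans (le_trans (norm_fst_le (Φ (w', η))) h) hC₁le
      · rw [hbη]
        exact le_trans (le_trans (le_of_eq (Real.norm_eq_abs _).symm)
          (le_trans (norm_snd_le (Φ (w', η))) h)) hC₁le
    · -- large η: use homogeneity
      have hlam1 : 1 ≤ ρ η := hρ1.le
      have hlam : 0 < ρ η := lt_of_lt_of_le one_pos hlam1
      set lam := ρ η with hlamdef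
      have hμpos : (0:ℝ) < lam⁻¹ := inv_pos.2 hlam
      have hμ1 : lam⁻¹ ≤ 1 := inv_le_one_of_one_le₀ hlam1
      set η₁ : Fin (p' + 1) → ℝ := fun j => lam⁻¹ ^ σs j * η j with hη₁def
      have hρη₁ : ρ η₁ = 1 := by
        rw [hη₁def, hρsmul lam⁻¹ hμpos.le η, inv_mul_cancel₀ hlam.ne']
      have hη₁ne : η₁ ≠ 0 := hS0 η₁ hρη₁
      -- the identity
      have hid : ∀ w'' : Wsp n, g (w'', η) = lam ^ α * g (DL lam⁻¹ w'', η₁) := by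
        intro w''
        have hmemΩ : ((Ddil σ lam⁻¹ w'', η₁) : Wsp n × (Fin (p' + 1) → ℝ)) ∈ OmegaSet n (p' + 1) :=
          hmem' _ _ hη₁ne
        have h := hghom lam hlam _ hmemΩ
        rw [show ((Ddil σ lam⁻¹ w'', η₁) : Wsp n × (Fin (p' + 1) → ℝ))
          = (Ddil σ lam⁻¹ w'', fun j => lam⁻¹ ^ σs j * η j) from rfl] at h
        rw [hED lam hlam w'' η] at h
        rw [h, hDL]
      -- the derivative identity
      have hcomp : HasFDerivAt (fun w'' : Wsp n => g (w'', η))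
          ((lam ^ α) • ((F' (DL lam⁻¹ w') η₁).comp (DL lam⁻¹))) w' := by
        have hinner : HasFDerivAt (fun w'' : Wsp n => (DL lam⁻¹) w'') (DL lam⁻¹) w' :=
          (DL lam⁻¹).hasFDerivAt
        have houter : HasFDerivAt (fun w => g (w, η₁)) (F' ((DL lam⁻¹) w') η₁)
            ((DL lam⁻¹) w') := hasF _ η₁ (hmem' _ _ hη₁ne)
        have h3 : HasFDerivAt (fun w'' : Wsp n => g ((DL lam⁻¹) w'', η₁))
            ((F' ((DL lam⁻¹) w') η₁).comp (DL lam⁻¹)) w' := houter.comp w' hinner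
        have h4 := h3.const_smul (lam ^ α)
        exact h4.congr_of_eventuallyEq (Filter.Eventually.of_forall fun w'' => by
          show g (w'', η) = lam ^ α • g ((DL lam⁻¹) w'', η₁)
          rw [smul_eq_mul]; exact hid w'')
      have huniq : F' w' η = (lam ^ α) • ((F' (DL lam⁻¹ w') η₁).comp (DL lam⁻¹)) :=
        (hasF w' η (hmem w' η (hball hw'))).unique hcomp
      -- membership in K₂
      have hK2mem : ((DL lam⁻¹ w', η₁) : Wsp n × (Fin (p' + 1) → ℝ)) ∈
          (Metric.closedBall (0 : Wsp n) (‖((z, ζ) : Wsp n)‖ + ε))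
            ×ˢ {η : Fin (p' + 1) → ℝ | ρ η = 1} := by
        constructor
        · rw [Metric.mem_closedBall, dist_zero_right]
          exact le_trans (hDLle lam⁻¹ hμpos.le hμ1 w') (norm_le_of_mem_closedBall hw')
        · exact hρη₁
      have hC2a : ‖F' (DL lam⁻¹ w') η₁‖ ≤ C₂ :=
        le_trans (norm_fst_le (Φ (DL lam⁻¹ w', η₁))) (hC₂ _ hK2mem)
      have hC2b : |g (DL lam⁻¹ w', η₁)| ≤ C₂ :=
        le_trans (le_of_eq (Real.norm_eq_abs _).symm)
          (le_trans (norm_snd_le (Φ (DL lam⁻¹ w', η₁))) (hC₂ _ hK2mem))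
      have hDLop : ‖(DL lam⁻¹ : Wsp n →L[ℝ] Wsp n)‖ ≤ 1 :=
        ContinuousLinearMap.opNorm_le_bound _ zero_le_one fun w => by
          rw [one_mul]; exact hDLle lam⁻¹ hμpos.le hμ1 w
      have hrpos : (0:ℝ) < lam ^ α := Real.rpow_pos_of_pos hlam α
      have hbη : bound η = C' * lam ^ α := by
        rw [hbounddef]
        simp only
        rw [max_eq_right hlam1]
      constructor
      · rw [huniq, hbη]
        have hns : ‖lam ^ α • ((F' (DL lam⁻¹ w') η₁).comp (DL lam⁻¹))‖
            = lam ^ α * ‖(F' (DL lam⁻¹ w') η₁).comp (DL lam⁻¹)‖ := by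
          rw [norm_smul (lam ^ α) ((F' (DL lam⁻¹ w') η₁).comp (DL lam⁻¹)),
            Real.norm_eq_abs, abs_of_pos hrpos]
        rw [hns]
        calc lam ^ α * ‖(F' (DL lam⁻¹ w') η₁).comp (DL lam⁻¹)‖
            ≤ lam ^ α * (C₂ * 1) := by
              apply mul_le_mul_of_nonneg_left _ hrpos.le
              exact le_trans (ContinuousLinearMap.opNorm_comp_le _ _)
                (mul_le_mul hC2a hDLop (norm_nonneg _) (le_trans (norm_nonneg _) hC2a))
          _ = C₂ * lam ^ α := by ring
          _ ≤ C' * lam ^ α := mul_le_mul_of_nonneg_right hC₂le hrpos.le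
      · rw [hid w', abs_mul, abs_of_pos hrpos, hbη]
        calc lam ^ α * |g (DL lam⁻¹ w', η₁)| ≤ lam ^ α * C₂ :=
              mul_le_mul_of_nonneg_left hC2b hrpos.le
          _ = C₂ * lam ^ α := by ring
          _ ≤ C' * lam ^ α := mul_le_mul_of_nonneg_right hC₂le hrpos.le
  -- continuity of slices
  have hslice : ∀ w' : Wsp n, w'.1 ≠ w'.2 → Continuous fun η : Fin (p' + 1) → ℝ => g (w', η) := by
    intro w' hne
    rw [continuous_iff_continuousAt]
    intro η
    exact (hgcont.continuousAt (hΩ.mem_nhds (hmem w' η hne))).comp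
      ((continuous_const.prodMk continuous_id).continuousAt)
  have hsliceF : Continuous fun η : Fin (p' + 1) → ℝ => F' (z, ζ) η := by
    have h1 : Continuous fun η : Fin (p' + 1) → ℝ => Φ (((z, ζ) : Wsp n), η) := by
      rw [continuous_iff_continuousAt]
      intro η
      exact (hΦc.continuousAt (hΩ.mem_nhds (hmem _ η hzζ))).comp
        ((continuous_const.prodMk continuous_id).continuousAt)
    exact h1.fst
  -- the parametric integral theorem
  have hMain : HasFDerivAt (fun w : Wsp n => ∫ η : Fin (p' + 1) → ℝ, g (w, η))
      (∫ η : Fin (p' + 1) → ℝ, F' (z, ζ) η) (z, ζ) := by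
    apply hasFDerivAt_integral_of_dominated_of_fderiv_le (F' := F') (bound := bound) (Metric.ball_mem_nhds _ hε)
    · apply Filter.eventually_of_mem (hVopen.mem_nhds hzζ)
      intro w' hw'
      exact (hslice w' hw').aestronglyMeasurable
    · apply Integrable.mono' hboundInt (hslice (z, ζ) hzζ).aestronglyMeasurable
      apply Filter.Eventually.of_forall
      intro η
      rw [Real.norm_eq_abs]
      exact (hbd η (z, ζ) (Metric.mem_closedBall_self hε.le)).2
    · exact hsliceF.aestronglyMeasurable
    · apply Filter.Eventually.of_forall
      intro η w' hw'
      exact (hbd η w' (Metric.ball_subset_closedBall hw')).1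
    · exact hboundInt
    · apply Filter.Eventually.of_forall
      intro η w' hw'
      exact hasF w' η (hmem w' η (hball (Metric.ball_subset_closedBall hw')))
  have hIntF' : Integrable (fun η : Fin (p' + 1) → ℝ => F' (z, ζ) η) := by
    apply Integrable.mono' hboundInt hsliceF.aestronglyMeasurable
    apply Filter.Eventually.of_forall
    intro η
    exact (hbd η (z, ζ) (Metric.mem_closedBall_self hε.le)).1
  have hfd_eq : ∀ η : Fin (p' + 1) → ℝ, fderiv ℝ (fun w => g (w, η)) (z, ζ) = F' (z, ζ) η :=
    fun η => (hasF _ η (hmem _ η hzζ)).fderiv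
  refine ⟨?_, hMain.differentiableAt, ?_⟩
  · simp only [hfd_eq]
    apply Integrable.mono' (hboundInt.mul_const ‖c (z, ζ)‖)
      ((hsliceF.clm_apply continuous_const).aestronglyMeasurable)
    apply Filter.Eventually.of_forall
    intro η
    exact le_trans (ContinuousLinearMap.le_opNorm _ _)
      (mul_le_mul_of_nonneg_right (hbd η (z, ζ) (Metric.mem_closedBall_self hε.le)).1
        (norm_nonneg _))
  · rw [hMain.fderiv, ContinuousLinearMap.integral_apply hIntF']
    simp only [hfd_eq]

end
end
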